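/- arXiv:1711.08483 — 15 statements merged into one kernel-verified Lean document; each statement's English description precedes it below -/
import Mathlib

section
/- If G is a finite group, N a normal subgroup of G, and (x̄₁,…,x̄ᵣ) a tuple generating G/N with r ≥ d(G), then there exist n₁,…,nᵣ ∈ N such that (x₁n₁,…,xᵣnᵣ) generates G, where xᵢ are preimages of x̄ᵢ. -/
open Subgroup
open scoped Pointwise

namespace GaschutzAux

variable {G : Type*} [Group G] [Finite G]

open scoped Classical

noncomputable local instance : Fintype (Subgroup G) := Fintype.ofFinite _
noncomputable local instance : Fintype G := Fintype.ofFinite _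

noncomputable def cnt (N : Subgroup G) {r : ℕ} (H : Subgroup G) (g : Fin r → G) : ℕ :=
  Nat.card {ν : Fin r → N // closure (Set.range fun i => g i * (ν i : G)) = H}

lemma card_lt_of_lt {K H : Subgroup G} (h : K < H) : Nat.card K < Nat.card H := by
  have h2 : (K : Set G) ⊂ (H : Set G) := h
  have e1 : Nat.card K = (K : Set G).ncard := Nat.card_coe_set_eq _
  have e2 : Nat.card H = (H : Set G).ncard := Nat.card_coe_set_eq _
  rw [e1, e2]
  exact Set.ncard_lt_ncard h2 (Set.toFinite _)

lemma cnt_eq_zero (N : Subgroup G) {r : ℕ} {K : Subgroup G} {g : Fin r → G}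
    (hg : closure (Set.range g) ⊔ N = ⊤) (hK : K ⊔ N ≠ ⊤) : cnt N K g = 0 := by
  rw [cnt, Nat.card_eq_zero]
  left
  constructor
  rintro ⟨ν, hν⟩
  apply hK
  rw [eq_top_iff, ← hg]
  refine sup_le ?_ le_sup_right
  rw [closure_le]
  rintro - ⟨i, rfl⟩
  have hgi : g i = (g i * (ν i : G)) * (ν i : G)⁻¹ := by group
  rw [hgi]
  exact mul_mem (le_sup_left (a := K) (b := N) (hν ▸ subset_closure ⟨i, rfl⟩))
    (le_sup_right (a := K) (b := N) (inv_mem (ν i).2))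

lemma factor_card (N : Subgroup G) [N.Normal] {H : Subgroup G} (hH : H ⊔ N = ⊤) (a : G) :
    Nat.card {n : N // a * (n : G) ∈ H} = Nat.card ↥(N ⊓ H) := by
  have hgi : a ∈ ((H : Set G) * (N : Set G)) := by
    rw [← Subgroup.mul_normal H N, hH]; trivial
  rw [Set.mem_mul] at hgi
  obtain ⟨h, hh, m, hm, rfl⟩ := hgi
  refine Nat.card_congr
    ⟨fun n => ⟨m * (n.1 : G), Subgroup.mem_inf.mpr ⟨mul_mem hm n.1.2, ?_⟩⟩,
     fun y => ⟨⟨m⁻¹ * (y : G), mul_mem (inv_mem hm) (Subgroup.mem_inf.mp y.2).1⟩, ?_⟩,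
     fun n => ?_, fun y => ?_⟩
  · have e : m * (n.1 : G) = h⁻¹ * (h * m * (n.1 : G)) := by group
    rw [e]; exact mul_mem (inv_mem hh) n.2
  · have e : h * m * (m⁻¹ * (y : G)) = h * (y : G) := by group
    rw [e]; exact mul_mem hh (Subgroup.mem_inf.mp y.2).2
  · apply Subtype.ext; apply Subtype.ext; simp
  · apply Subtype.ext; simp

lemma card_mem_eq (N : Subgroup G) [N.Normal] {r : ℕ} {H : Subgroup G} (hH : H ⊔ N = ⊤)
    (g : Fin r → G) :
    Nat.card {ν : Fin r → N // ∀ i, g i * (ν i : G) ∈ H} = Nat.card ↥(N ⊓ H) ^ r := by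
  rw [Nat.card_congr (Equiv.subtypePiEquivPi (p := fun i (n : N) => g i * (n : G) ∈ H)),
    Nat.card_pi, Finset.prod_congr rfl (fun i _ => factor_card N hH (g i)),
    Finset.prod_const, Finset.card_univ, Fintype.card_fin]

lemma sum_cnt (N : Subgroup G) [N.Normal] {r : ℕ} {H : Subgroup G} (hH : H ⊔ N = ⊤)
    (g : Fin r → G) :
    ∑ K ∈ Finset.univ.filter (· ≤ H), cnt N K g = Nat.card ↥(N ⊓ H) ^ r := by
  rw [← card_mem_eq N hH g]
  rw [Nat.card_eq_fintype_card, Fintype.card_subtype]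
  rw [Finset.card_eq_sum_card_fiberwise
    (f := fun ν : Fin r → N => closure (Set.range fun i => g i * (ν i : G)))
    (t := Finset.univ.filter (· ≤ H)) ?_]
  · refine Finset.sum_congr rfl fun K hK => ?_
    simp only [Finset.mem_filter, Finset.mem_univ, true_and] at hK
    rw [cnt, Nat.card_eq_fintype_card, Fintype.card_subtype]
    congr 1
    ext ν
    simp only [Finset.mem_filter, Finset.mem_univ, true_and]
    constructor
    · rintro rfl
      exact ⟨fun i => hK (subset_closure ⟨i, rfl⟩), rfl⟩
    · exact fun h => h.2
  · intro ν hν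
    simp only [Finset.mem_coe, Finset.mem_filter, Finset.mem_univ, true_and] at hν ⊢
    rw [closure_le]
    rintro - ⟨i, rfl⟩
    exact hν i

theorem cnt_indep (N : Subgroup G) [N.Normal] {r : ℕ} (H : Subgroup G) (hH : H ⊔ N = ⊤)
    (g g' : Fin r → G) (hg : closure (Set.range g) ⊔ N = ⊤)
    (hg' : closure (Set.range g') ⊔ N = ⊤) : cnt N H g = cnt N H g' := by
  have IH : ∀ K : Subgroup G, K < H → cnt N K g = cnt N K g' := by
    intro K hK
    by_cases hKN : K ⊔ N = ⊤
    · exact cnt_indep N K hKN g g' hg hg'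
    · rw [cnt_eq_zero N hg hKN, cnt_eq_zero N hg' hKN]
  have h1 := sum_cnt N hH g
  have h2 := sum_cnt N hH g'
  have hsplit : (Finset.univ.filter (· ≤ H) : Finset (Subgroup G)) =
      insert H (Finset.univ.filter (· < H)) := by
    ext K
    simp [le_iff_lt_or_eq, or_comm]
  rw [hsplit, Finset.sum_insert (by simp [lt_irrefl])] at h1 h2
  have hs : ∑ K ∈ Finset.univ.filter (· < H), cnt N K g
      = ∑ K ∈ Finset.univ.filter (· < H), cnt N K g' := by
    refine Finset.sum_congr rfl fun K hK => ?_
    simp only [Finset.mem_filter, Finset.mem_univ, true_and] at hK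
    exact IH K hK
  omega
termination_by Nat.card ↥H
decreasing_by exact card_lt_of_lt hK

end GaschutzAux

/-- A spherical system of generators: a tuple (list) of nontrivial elements
generating `G` whose product is `1`. -/
def IsSpherical {G : Type*} [Group G] (T : List G) : Prop :=
  (∀ g ∈ T, g ≠ 1) ∧ Subgroup.closure {g : G | g ∈ T} = ⊤ ∧ T.prod = 1

/-- `Σ(T)`: the union of all conjugates of the cyclic subgroups generated by
the entries of `T`. -/
def SigmaSet {G : Type*} [Group G] (T : List G) : Set G :=
  {x : G | ∃ t ∈ T, ∃ c : G, ∃ k : ℤ, x = c * t ^ k * c⁻¹}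

/-- An (unmixed) ramification structure: a pair of spherical systems of
generators which are disjoint, i.e. `Σ(T₁) ∩ Σ(T₂) = {1}`. -/
def IsRamificationStructure {G : Type*} [Group G] (T₁ T₂ : List G) : Prop :=
  IsSpherical T₁ ∧ IsSpherical T₂ ∧ SigmaSet T₁ ∩ SigmaSet T₂ = {1}

theorem stmt_1 {G : Type*} [Group G] [Finite G] (N : Subgroup G) [N.Normal]
    (x : List G) (hr : x.length ≥ Group.rank G)
    (hgen : Subgroup.closure
      {q : G ⧸ N | q ∈ x.map (QuotientGroup.mk : G → G ⧸ N)} = ⊤) :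
    ∃ n : List G, n.length = x.length ∧ (∀ m ∈ n, m ∈ N) ∧
      Subgroup.closure {g : G | g ∈ List.zipWith (· * ·) x n} = ⊤ := by
  classical
  set r := x.length with hrdef
  set g : Fin r → G := x.get with hgdef
  -- translate the quotient generation hypothesis
  have hg : Subgroup.closure (Set.range g) ⊔ N = ⊤ := by
    have hset : {q : G ⧸ N | q ∈ x.map (QuotientGroup.mk : G → G ⧸ N)}
        = (QuotientGroup.mk' N) '' (Set.range g) := by
      ext q
      simp only [Set.mem_setOf_eq, List.mem_map, Set.mem_image, Set.mem_range]
      constructor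
      · rintro ⟨a, ha, rfl⟩
        obtain ⟨i, rfl⟩ := List.mem_iff_get.mp ha
        exact ⟨g i, ⟨i, rfl⟩, rfl⟩
      · rintro ⟨a, ⟨i, rfl⟩, rfl⟩
        exact ⟨g i, List.get_mem x i, rfl⟩
    rw [hset, ← MonoidHom.map_closure] at hgen
    have := congrArg (Subgroup.comap (QuotientGroup.mk' N)) hgen
    rwa [Subgroup.comap_map_eq, QuotientGroup.ker_mk', Subgroup.comap_top] at this
  -- a reference tuple generating G
  obtain ⟨S, hScard, hSgen⟩ := Group.rank_spec G
  have hSr : S.card ≤ r := hScard ▸ hr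
  set g₀ : Fin r → G := fun i =>
    if h : (i : ℕ) < S.card then ((S.equivFin.symm ⟨i, h⟩ : S) : G) else 1 with hg₀def
  have hg₀gen : Subgroup.closure (Set.range g₀) = ⊤ := by
    rw [eq_top_iff, ← hSgen]
    apply Subgroup.closure_mono
    intro a ha
    have ha' : a ∈ S := ha
    refine ⟨⟨(S.equivFin ⟨a, ha'⟩ : ℕ), lt_of_lt_of_le (S.equivFin ⟨a, ha'⟩).2 hSr⟩, ?_⟩
    simp only [hg₀def]
    rw [dif_pos (S.equivFin ⟨a, ha'⟩).2]
    have : (⟨(S.equivFin ⟨a, ha'⟩ : ℕ), (S.equivFin ⟨a, ha'⟩).2⟩ : Fin S.card)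
        = S.equivFin ⟨a, ha'⟩ := rfl
    rw [this, Equiv.symm_apply_apply]
  have hg₀ : Subgroup.closure (Set.range g₀) ⊔ N = ⊤ := by rw [hg₀gen]; exact top_sup_eq N
  -- positivity of the count for g₀
  have hpos : 0 < GaschutzAux.cnt N ⊤ g₀ := by
    rw [GaschutzAux.cnt, Nat.card_pos_iff]
    refine ⟨⟨⟨fun _ => 1, ?_⟩⟩, Subtype.finite⟩
    simpa using hg₀gen
  -- transfer the count to g
  have heq : GaschutzAux.cnt N ⊤ g = GaschutzAux.cnt N ⊤ g₀ :=
    GaschutzAux.cnt_indep N ⊤ (by simp) g g₀ hg hg₀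
  rw [← heq] at hpos
  rw [GaschutzAux.cnt, Nat.card_pos_iff] at hpos
  obtain ⟨⟨ν, hν⟩⟩ := hpos.1
  refine ⟨List.ofFn (fun i => (ν i : G)), by simp [hrdef], ?_, ?_⟩
  · intro m hm
    rw [List.mem_ofFn] at hm
    obtain ⟨i, rfl⟩ := hm
    exact (ν i).2
  · have hzip : List.zipWith (· * ·) x (List.ofFn fun i => (ν i : G))
        = List.ofFn (fun i => g i * (ν i : G)) := by
      apply List.ext_getElem
      · simp [hrdef]
      · intro i h1 h2
        simp [hgdef]
    rw [hzip]
    have : {a : G | a ∈ List.ofFn (fun i => g i * (ν i : G))}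
        = Set.range (fun i => g i * (ν i : G)) := by
      ext a
      simp [List.mem_ofFn, Set.mem_range]
    rw [this, hν]
end

section
/- The elementary abelian group C₃ × C₃ does not admit a ramification structure (T₁, T₂) in which T₁ has size 3. -/
private abbrev GG := Multiplicative (ZMod 3) × Multiplicative (ZMod 3)

private lemma pow3 : ∀ x : GG, x ^ (3:ℕ) = 1 := by decide

private lemma zpow_fin3 (x : GG) (k : ℤ) : ∃ r : Fin 3, x ^ k = x ^ (r : ℕ) := by
  have h3 : x ^ (3:ℕ) = 1 := pow3 x
  have hlt : (k % 3).toNat < 3 := by omega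
  refine ⟨⟨(k % 3).toNat, hlt⟩, ?_⟩
  conv_lhs => rw [show k = 3 * (k / 3) + k % 3 from (Int.mul_ediv_add_emod k 3).symm]
  have h3' : x ^ (3:ℤ) = 1 := by
    rw [show (3:ℤ) = ((3:ℕ):ℤ) by norm_num, zpow_natCast, h3]
  rw [zpow_add, zpow_mul, h3', one_zpow, one_mul, ← zpow_natCast]
  congr 1
  simp
  omega

set_option synthInstance.maxSize 4000 in
set_option maxHeartbeats 4000000 in
private lemma not_gen : ∀ a : GG, ∃ x : GG, ∀ r : Fin 3, x ≠ a ^ (r:ℕ) := by decide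

set_option synthInstance.maxSize 4000 in
set_option maxHeartbeats 4000000 in
private lemma key : ∀ a b t : GG, a = 1 ∨ b = 1 ∨ a*b = 1 ∨ t = 1 ∨
    (∃ r : Fin 3, b = a^(r:ℕ)) ∨ (∃ r : Fin 3, t = a^(r:ℕ)) ∨ (∃ r : Fin 3, t = b^(r:ℕ)) ∨
    (∃ r : Fin 3, t = ((a*b)⁻¹)^(r:ℕ)) ∨ (∃ r : Fin 3, t = (a*b⁻¹)^(r:ℕ)) := by decide

set_option synthInstance.maxSize 4000 in
set_option maxHeartbeats 4000000 in
private lemma final : ∀ a b : GG, a = 1 ∨ b = 1 ∨ a*b = 1 ∨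
    ∀ r : Fin 3, a ≠ (a*b⁻¹)^(r:ℕ) := by decide

theorem stmt_3 :
    ¬ ∃ T₁ T₂ : List (Multiplicative (ZMod 3) × Multiplicative (ZMod 3)),
      T₁.length = 3 ∧ IsRamificationStructure T₁ T₂ := by
  rintro ⟨T₁, T₂, hlen, ⟨hnt1, hgen1, hprod1⟩, ⟨hnt2, hgen2, _⟩, hdisj⟩
  obtain ⟨a, b, c, rfl⟩ := List.length_eq_three.mp hlen
  have ha : a ≠ 1 := hnt1 a (by simp)
  have hb : b ≠ 1 := hnt1 b (by simp)
  have hc : c ≠ 1 := hnt1 c (by simp)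
  have h1 : a * b * c = 1 := by simpa [mul_assoc] using hprod1
  have hc' : c = (a * b)⁻¹ := eq_inv_of_mul_eq_one_right h1
  have hab : a * b ≠ 1 := fun h => hc (by rw [hc', h, inv_one])
  -- powers of entries of T₁ belong to Σ(T₁)
  have hS : ∀ s ∈ [a, b, c], ∀ r : ℕ, s ^ r ∈ SigmaSet [a, b, c] := by
    intro s hs r
    exact ⟨s, hs, 1, (r : ℤ), by simp⟩
  -- independence of a and b
  have hind : ∀ r : Fin 3, b ≠ a ^ (r : ℕ) := by
    intro r hbr
    obtain ⟨x, hx⟩ := not_gen a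
    have hx' : x ∈ Subgroup.closure {g : GG | g ∈ [a, b, c]} := by rw [hgen1]; trivial
    have hle : Subgroup.closure {g : GG | g ∈ [a, b, c]} ≤ Subgroup.zpowers a := by
      rw [Subgroup.closure_le]
      intro g hg
      simp only [Set.mem_setOf_eq, List.mem_cons, List.not_mem_nil, or_false] at hg
      rcases hg with h | h | h
      · rw [h]
        exact Subgroup.mem_zpowers a
      · rw [h, hbr]
        exact pow_mem (Subgroup.mem_zpowers a) _
      · rw [h, hc', hbr]
        exact inv_mem (mul_mem (Subgroup.mem_zpowers a) (pow_mem (Subgroup.mem_zpowers a) _))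
    obtain ⟨k, hk⟩ := Subgroup.mem_zpowers_iff.mp (hle hx')
    obtain ⟨r', hr'⟩ := zpow_fin3 a k
    exact hx r' (by rw [← hk, hr'])
  -- every element of T₂ lies in ⟨a * b⁻¹⟩
  have hT2 : ∀ t ∈ T₂, ∃ r : Fin 3, t = (a * b⁻¹) ^ (r : ℕ) := by
    intro t ht
    have ht1 : t ≠ 1 := hnt2 t ht
    have htS2 : t ∈ SigmaSet T₂ := ⟨t, ht, 1, 1, by simp⟩
    have htS1 : t ∉ SigmaSet [a, b, c] := by
      intro h
      have : t ∈ ({1} : Set GG) := hdisj ▸ ⟨h, htS2⟩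
      exact ht1 (by simpa using this)
    rcases key a b t with h | h | h | h | ⟨r, h⟩ | ⟨r, h⟩ | ⟨r, h⟩ | ⟨r, h⟩ | ⟨r, h⟩
    · exact absurd h ha
    · exact absurd h hb
    · exact absurd h hab
    · exact absurd h ht1
    · exact absurd h (hind r)
    · exact absurd (by rw [h]; exact hS a (by simp) (r : ℕ)) htS1
    · exact absurd (by rw [h]; exact hS b (by simp) (r : ℕ)) htS1
    · exact absurd (by rw [h, ← hc']; exact hS c (by simp) (r : ℕ)) htS1
    · exact ⟨r, h⟩
  -- T₂ generates, so a ∈ ⟨a * b⁻¹⟩ : contradiction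
  have hle2 : Subgroup.closure {g : GG | g ∈ T₂} ≤ Subgroup.zpowers (a * b⁻¹) := by
    rw [Subgroup.closure_le]
    intro g hg
    obtain ⟨r, hr⟩ := hT2 g hg
    rw [hr]
    exact pow_mem (Subgroup.mem_zpowers _) _
  have haz : a ∈ Subgroup.zpowers (a * b⁻¹) := hle2 (by rw [hgen2]; trivial)
  obtain ⟨k, hk⟩ := Subgroup.mem_zpowers_iff.mp haz
  obtain ⟨r, hr⟩ := zpow_fin3 (a * b⁻¹) k
  rcases final a b with h | h | h | h
  exacts [ha h, hb h, hab h, h r (hk.symm.trans hr)]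
end

section
/- The elementary abelian group C₂ × C₂ × C₂ does not admit a ramification structure (T₁, T₂) in which T₁ has size 4. -/
abbrev Gr := Multiplicative (Fin 3 → ZMod 2)

lemma sq_one : ∀ g : Gr, g * g = 1 := by decide

lemma exists_prod (S : Finset Gr) (V : Finset Gr) :
    V ⊆ S → ∀ U ⊆ S, ∃ W ⊆ S, W.prod id = U.prod id * V.prod id := by
  induction V using Finset.induction_on with
  | empty => intro _ U hU; exact ⟨U, hU, by simp⟩
  | @insert v V hv ih =>
    intro hVS U hU
    have hvS : v ∈ S := hVS (Finset.mem_insert_self v V)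
    have hVS' : V ⊆ S := fun x hx => hVS (Finset.mem_insert_of_mem hx)
    by_cases hvU : v ∈ U
    · obtain ⟨W, hW, hWp⟩ := ih hVS' (U.erase v)
        (fun x hx => hU (Finset.mem_of_mem_erase hx))
      refine ⟨W, hW, ?_⟩
      rw [hWp, Finset.prod_insert hv,
        show U.prod id = v * (U.erase v).prod id from (Finset.mul_prod_erase U id hvU).symm,
        mul_mul_mul_comm]
      simp only [id_eq]
      rw [sq_one, one_mul]
    · obtain ⟨W, hW, hWp⟩ := ih hVS' (insert v U) (Finset.insert_subset hvS hU)
      refine ⟨W, hW, ?_⟩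
      rw [hWp, Finset.prod_insert hvU, Finset.prod_insert hv]
      simp only [id_eq]
      rw [mul_assoc]
      exact mul_left_comm _ _ _

lemma span_prod (S : Finset Gr) (h : Subgroup.closure (S : Set Gr) = ⊤) :
    ∀ x : Gr, ∃ U ∈ S.powerset, U.prod id = x := by
  intro x
  have hx : x ∈ Subgroup.closure (S : Set Gr) := h ▸ Subgroup.mem_top x
  have : ∃ U ⊆ S, U.prod id = x := by
    induction hx using Subgroup.closure_induction with
    | mem y hy => exact ⟨{y}, by simpa using hy, by simp⟩
    | one => exact ⟨∅, by simp, by simp⟩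
    | mul y z hy hz ihy ihz =>
      obtain ⟨U, hU, hUp⟩ := ihy
      obtain ⟨V, hV, hVp⟩ := ihz
      obtain ⟨W, hW, hWp⟩ := exists_prod S V hV U hU
      exact ⟨W, hW, by rw [hWp, hUp, hVp]⟩
    | inv y hy ihy =>
      obtain ⟨U, hU, hUp⟩ := ihy
      exact ⟨U, hU, by rw [hUp, inv_eq_of_mul_eq_one_right (sq_one y)]⟩
  obtain ⟨U, hU, hUp⟩ := this
  exact ⟨U, Finset.mem_powerset.2 hU, hUp⟩

set_option synthInstance.maxSize 2000 in
set_option synthInstance.maxHeartbeats 1000000 in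
set_option maxHeartbeats 10000000 in
lemma key_s4 : ∀ a b c d : Gr, ¬(a ≠ 1 ∧ b ≠ 1 ∧ c ≠ 1 ∧ d ≠ 1 ∧ a*b*c*d = 1 ∧
    (∀ x : Gr, ∃ U ∈ ({a,b,c,d} : Finset Gr).powerset, U.prod id = x) ∧
    (∀ x : Gr, ∃ U ∈ (Finset.univ \ insert 1 {a,b,c,d} : Finset Gr).powerset, U.prod id = x)) := by
  decide

theorem stmt_4 :
    ¬ ∃ T₁ T₂ : List (Multiplicative (Fin 3 → ZMod 2)),
      T₁.length = 4 ∧ IsRamificationStructure T₁ T₂ := by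
  rintro ⟨T₁, T₂, hlen, ⟨h1ne, h1cl, h1prod⟩, ⟨h2ne, h2cl, h2prod⟩, hdisj⟩
  obtain ⟨a, b, c, d, rfl⟩ : ∃ a b c d, T₁ = [a, b, c, d] := by
    rcases T₁ with _ | ⟨a, _ | ⟨b, _ | ⟨c, _ | ⟨d, _ | ⟨e, t⟩⟩⟩⟩⟩ <;> simp at hlen
    exact ⟨a, b, c, d, rfl⟩
  -- entries of T₁ and T₂ are disjoint
  have hmem : ∀ g, g ∈ [a, b, c, d] → g ∈ T₂ → False := by
    intro g hg1 hg2
    have hs1 : g ∈ SigmaSet [a, b, c, d] := ⟨g, hg1, 1, 1, by simp⟩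
    have hs2 : g ∈ SigmaSet T₂ := ⟨g, hg2, 1, 1, by simp⟩
    have : g = 1 := by
      have := Set.mem_inter hs1 hs2
      rw [hdisj] at this
      exact this
    exact h1ne g hg1 this
  -- the entry set of T₁ spans
  have hAset : {g : Gr | g ∈ [a, b, c, d]} = (({a, b, c, d} : Finset Gr) : Set Gr) := by
    ext x; simp
  have spanA : ∀ x : Gr, ∃ U ∈ ({a, b, c, d} : Finset Gr).powerset, U.prod id = x :=
    span_prod _ (by rw [← hAset]; exact h1cl)
  -- the complement of T₁'s entries (and 1) spans, since T₂'s entries lie in it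
  have hBset : {g : Gr | g ∈ T₂} = ((T₂.toFinset : Finset Gr) : Set Gr) := by
    ext x; simp
  have hBC : ((T₂.toFinset : Finset Gr) : Set Gr) ⊆
      ((Finset.univ \ insert 1 {a, b, c, d} : Finset Gr) : Set Gr) := by
    intro x hx
    simp only [Finset.coe_sdiff, Finset.coe_univ, Set.mem_diff, Set.mem_univ, true_and,
      Finset.coe_insert, Finset.coe_singleton, Set.mem_insert_iff, Set.mem_singleton_iff,
      Finset.mem_coe, List.mem_toFinset] at hx ⊢
    intro h
    rcases h with rfl | rfl | rfl | rfl | rfl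
    · exact h2ne _ hx rfl
    all_goals exact hmem _ (by simp) hx
  have hCcl : Subgroup.closure
      (((Finset.univ \ insert 1 {a, b, c, d} : Finset Gr) : Set Gr)) = ⊤ := by
    rw [eq_top_iff]
    calc (⊤ : Subgroup Gr) = Subgroup.closure ((T₂.toFinset : Finset Gr) : Set Gr) := by
          rw [← hBset]; exact h2cl.symm
      _ ≤ _ := Subgroup.closure_mono hBC
  have spanC := span_prod _ hCcl
  have hprod : a * b * c * d = 1 := by
    simpa [mul_assoc] using h1prod
  exact key_s4 a b c d ⟨h1ne a (by simp), h1ne b (by simp), h1ne c (by simp), h1ne d (by simp),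
    hprod, spanA, spanC⟩
end

section
/- If the elementary abelian group C₂ × C₂ × C₂ admits a ramification structure (T₁, T₂) of size (r₁, r₂), then r₁ and r₂ are not both odd. -/
set_option maxRecDepth 1000000
set_option synthInstance.maxSize 2000
set_option synthInstance.maxHeartbeats 1000000
set_option maxHeartbeats 10000000

private abbrev AA := Fin 3 → ZMod 2

private theorem key5 : ∀ S : Finset AA, S.card ≤ 3 → (0:AA) ∉ S →
    (∃ f : AA → ZMod 2, (∀ g, f g ≠ 0 → g ∈ S) ∧ (∑ g : AA, f g • g = 0) ∧ (∑ g : AA, f g) = 1) →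
    ∃ v : AA, v ≠ 0 ∧ ∀ s ∈ S, (∑ i, v i * s i) = 0 := by decide

private theorem sum_map_toAdd {α : Type*} [AddMonoid α] (T : List (Multiplicative α)) :
    (T.map Multiplicative.toAdd).sum = Multiplicative.toAdd T.prod := by
  induction T with
  | nil => rfl
  | cons a t ih => rw [List.map_cons, List.sum_cons, List.prod_cons, toAdd_mul, ih]

private theorem odd_cast_two {n : ℕ} (h : Odd n) : (n : ZMod 2) = 1 := by
  obtain ⟨k, rfl⟩ := h
  push_cast
  rw [show (2 : ZMod 2) = 0 from rfl]
  ring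

private theorem card_ge_four (T : List (Multiplicative AA)) (hT : IsSpherical T)
    (hodd : Odd T.length) : 4 ≤ T.toFinset.card := by
  obtain ⟨hne, hcl, hprod⟩ := hT
  by_contra hlt
  push_neg at hlt
  set S : Finset AA := T.toFinset.image Multiplicative.toAdd with hSdef
  have hScard : S.card = T.toFinset.card :=
    Finset.card_image_of_injective _ (fun a b h => h)
  have hcard : S.card ≤ 3 := by omega
  have h0 : (0:AA) ∉ S := by
    intro h0
    obtain ⟨t, ht, hteq⟩ := Finset.mem_image.mp h0
    exact hne t (List.mem_toFinset.mp ht) (by simpa using hteq)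
  set T' : List AA := T.map Multiplicative.toAdd with hT'def
  have hsum' : T'.sum = 0 := by
    rw [hT'def, sum_map_toAdd, hprod]; rfl
  have hcount : ∀ a : AA, T'.count a = T.count (Multiplicative.ofAdd a) := fun a =>
    List.count_map_of_injective T Multiplicative.toAdd (fun _ _ h => h) (Multiplicative.ofAdd a)
  set f : AA → ZMod 2 := fun a => ((T'.count a : ℕ) : ZMod 2) with hfdef
  have hsupp : ∀ g, f g ≠ 0 → g ∈ S := by
    intro g hg
    have hgc : T'.count g ≠ 0 := fun hc => hg (by rw [hfdef]; simp [hc])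
    have hgm : g ∈ T' := by
      by_contra hgm
      exact hgc (List.count_eq_zero.mpr hgm)
    obtain ⟨t, ht, rfl⟩ := List.mem_map.mp hgm
    exact Finset.mem_image.mpr ⟨t, List.mem_toFinset.mpr ht, rfl⟩
  have hzero : ∀ g ∈ Finset.univ, g ∉ T'.toFinset → T'.count g = 0 := by
    intro g _ hg
    exact List.count_eq_zero.mpr (fun h => hg (List.mem_toFinset.mpr h))
  have hsum : ∑ g : AA, f g • g = 0 := by
    calc ∑ g : AA, f g • g = ∑ g : AA, T'.count g • g := by
          refine Finset.sum_congr rfl fun g _ => ?_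
          rw [hfdef, Nat.cast_smul_eq_nsmul]
      _ = ∑ g ∈ T'.toFinset, T'.count g • g := by
          refine (Finset.sum_subset (Finset.subset_univ _) fun g hg hg' => ?_).symm
          rw [hzero g hg hg', zero_smul]
      _ = T'.sum := (Finset.sum_list_count T').symm
      _ = 0 := hsum'
  have hlen : ∑ g : AA, f g = 1 := by
    have hl : ∑ g : AA, T'.count g = T'.length := by
      rw [← List.sum_toFinset_count_eq_length]
      exact (Finset.sum_subset (Finset.subset_univ _) hzero).symm
    have : ∑ g : AA, f g = ((∑ g : AA, T'.count g : ℕ) : ZMod 2) := by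
      rw [Nat.cast_sum]
    rw [this, hl]
    have : T'.length = T.length := List.length_map _
    rw [this]
    exact odd_cast_two hodd
  obtain ⟨v, hv0, hvS⟩ := key5 S hcard h0 ⟨f, hsupp, hsum, hlen⟩
  set φ : AA →+ ZMod 2 := AddMonoidHom.mk' (fun x => ∑ i, v i * x i)
    (by intro x y; simp [mul_add, Finset.sum_add_distrib]) with hφdef
  set ψ := AddMonoidHom.toMultiplicative φ with hψdef
  have hker : ∀ x, ψ x = 1 := by
    have hle : Subgroup.closure {g : Multiplicative AA | g ∈ T} ≤ ψ.ker := by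
      refine (Subgroup.closure_le _).mpr fun t ht => ?_
      have hts : Multiplicative.toAdd t ∈ S :=
        Finset.mem_image.mpr ⟨t, List.mem_toFinset.mpr ht, rfl⟩
      have : φ (Multiplicative.toAdd t) = 0 := hvS _ hts
      show ψ t = 1
      rw [hψdef]
      simpa using this
    rw [hcl] at hle
    exact fun x => hle (Subgroup.mem_top x)
  obtain ⟨i, hvi⟩ := Function.ne_iff.mp hv0
  have hx := hker (Multiplicative.ofAdd (Pi.single i 1))
  have hval : φ (Pi.single i 1) = v i := by
    have h1 : φ (Pi.single i 1) = ∑ j, v j * (Pi.single i 1 : AA) j := rfl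
    rw [h1, Finset.sum_eq_single i (fun j _ hj => by rw [Pi.single_eq_of_ne hj, mul_zero])
      (fun h => absurd (Finset.mem_univ i) h), Pi.single_eq_same, mul_one]
  rw [hψdef] at hx
  have : φ (Pi.single i 1) = 0 := by simpa using hx
  rw [hval] at this
  exact hvi (by simpa using this)

theorem stmt_5 (T₁ T₂ : List (Multiplicative (Fin 3 → ZMod 2)))
    (h : IsRamificationStructure T₁ T₂) :
    ¬ (Odd T₁.length ∧ Odd T₂.length) := by
  rintro ⟨ho1, ho2⟩
  obtain ⟨hs1, hs2, hsig⟩ := h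
  have hdisj : Disjoint T₁.toFinset T₂.toFinset := by
    rw [Finset.disjoint_left]
    intro t ht1 ht2
    have hmem : t ∈ SigmaSet T₁ ∩ SigmaSet T₂ :=
      ⟨⟨t, List.mem_toFinset.mp ht1, 1, 1, by simp⟩,
       ⟨t, List.mem_toFinset.mp ht2, 1, 1, by simp⟩⟩
    rw [hsig] at hmem
    exact hs1.1 t (List.mem_toFinset.mp ht1) hmem
  have h1' : (1 : Multiplicative AA) ∉ T₁.toFinset ∪ T₂.toFinset := by
    intro ht
    rcases Finset.mem_union.mp ht with ht | ht
    · exact hs1.1 1 (List.mem_toFinset.mp ht) rfl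
    · exact hs2.1 1 (List.mem_toFinset.mp ht) rfl
  have c1 := card_ge_four T₁ hs1 ho1
  have c2 := card_ge_four T₂ hs2 ho2
  have hcu : (T₁.toFinset ∪ T₂.toFinset).card = T₁.toFinset.card + T₂.toFinset.card :=
    Finset.card_union_of_disjoint hdisj
  have hins : (insert 1 (T₁.toFinset ∪ T₂.toFinset)).card
      = (T₁.toFinset ∪ T₂.toFinset).card + 1 := Finset.card_insert_of_notMem h1'
  have hle : (insert 1 (T₁.toFinset ∪ T₂.toFinset)).card ≤ Fintype.card (Multiplicative AA) :=
    Finset.card_le_univ _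
  have hcardA : Fintype.card (Multiplicative AA) = 8 := rfl
  omega
end

section
/- For every prime p ≥ 5, the group Cₚ × Cₚ admits a ramification structure of size (3,3); explicitly, with generators x₁, x₂, the tuples T₁ = (x₁, x₂, (x₁x₂)⁻¹) and T₂ = (x₁x₂², x₁x₂⁴, (x₁²x₂⁶)⁻¹) form a ramification structure. -/
open Multiplicative

def ee (p : ℕ) (a b : ZMod p) : Multiplicative (ZMod p) × Multiplicative (ZMod p) :=
  (ofAdd a, ofAdd b)

variable {p : ℕ}

lemma ee_mul (a b c d : ZMod p) : ee p a b * ee p c d = ee p (a + c) (b + d) := rfl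

lemma ee_zpow (a b : ZMod p) (k : ℤ) : ee p a b ^ k = ee p (k • a) (k • b) := by
  simp [ee, Prod.pow_def, ← ofAdd_zsmul]

lemma ee_pow (a b : ZMod p) (k : ℕ) : ee p a b ^ k = ee p (k • a) (k • b) := by
  simp [ee, Prod.pow_def, ← ofAdd_nsmul]

lemma ee_inv (a b : ZMod p) : (ee p a b)⁻¹ = ee p (-a) (-b) := rfl

lemma ee_inj {a b c d : ZMod p} : ee p a b = ee p c d ↔ a = c ∧ b = d := by
  simp [ee, Prod.ext_iff]

lemma ee_eq_one {a b : ZMod p} : ee p a b = 1 ↔ a = 0 ∧ b = 0 := by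
  simp [ee, Prod.ext_iff]

lemma mzero {F : Type*} [Field F] {x c : F} (hc : c ≠ 0) (h : x * c = 0) : x = 0 := by
  rcases mul_eq_zero.1 h with h | h
  · exact h
  · exact absurd h hc

lemma ee_gen [NeZero p] (S : Set (Multiplicative (ZMod p) × Multiplicative (ZMod p)))
    (h1 : ee p 1 0 ∈ Subgroup.closure S) (h2 : ee p 0 1 ∈ Subgroup.closure S) : Subgroup.closure S = ⊤ := by
  rw [Subgroup.eq_top_iff']
  intro g
  have hg : g = ee p 1 0 ^ (toAdd g.1).val * ee p 0 1 ^ (toAdd g.2).val := by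
    rw [ee_pow, ee_pow, ee_mul]
    show g = ee p _ _
    refine Prod.ext ?_ ?_ <;>
      simp [ee, nsmul_eq_mul, ZMod.natCast_val, ZMod.cast_id]
  rw [hg]
  exact mul_mem (pow_mem h1 _) (pow_mem h2 _)

theorem stmt_6 (p : ℕ) (hp : p.Prime) (h5 : 5 ≤ p) :
    let x₁ : Multiplicative (ZMod p) × Multiplicative (ZMod p) :=
      (Multiplicative.ofAdd 1, 1)
    let x₂ : Multiplicative (ZMod p) × Multiplicative (ZMod p) :=
      (1, Multiplicative.ofAdd 1)
    IsRamificationStructure [x₁, x₂, (x₁ * x₂)⁻¹]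
      [x₁ * x₂ ^ 2, x₁ * x₂ ^ 4, (x₁ ^ 2 * x₂ ^ 6)⁻¹] := by
  intro x₁ x₂
  haveI : Fact p.Prime := ⟨hp⟩
  haveI : NeZero p := ⟨hp.pos.ne'⟩
  have hne : ∀ n : ℕ, n ≠ 0 → n ≤ 4 → ((n : ZMod p) ≠ 0) := by
    intro n hn h6 h
    rw [ZMod.natCast_eq_zero_iff] at h
    have := Nat.le_of_dvd (Nat.pos_of_ne_zero hn) h
    omega
  have h1' : (1 : ZMod p) ≠ 0 := one_ne_zero
  have h2' : (2 : ZMod p) ≠ 0 := by have := hne 2 (by norm_num) (by norm_num); exact_mod_cast this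
  have h3' : (3 : ZMod p) ≠ 0 := by have := hne 3 (by norm_num) (by norm_num); exact_mod_cast this
  have h4' : (4 : ZMod p) ≠ 0 := by have := hne 4 (by norm_num) (by norm_num); exact_mod_cast this
  have h6' : (6 : ZMod p) ≠ 0 := by
    have h : (6 : ZMod p) = 2 * 3 := by norm_num
    rw [h]; exact mul_ne_zero h2' h3'
  have e1 : x₁ = ee p 1 0 := rfl
  have e2 : x₂ = ee p 0 1 := rfl
  have e3 : (x₁ * x₂)⁻¹ = ee p (-1) (-1) := by rw [e1, e2, ee_mul, ee_inv]; norm_num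
  have e4 : x₁ * x₂ ^ 2 = ee p 1 2 := by
    rw [e1, e2, ee_pow, ee_mul]; norm_num [nsmul_eq_mul]
  have e5 : x₁ * x₂ ^ 4 = ee p 1 4 := by
    rw [e1, e2, ee_pow, ee_mul]; norm_num [nsmul_eq_mul]
  have e6 : (x₁ ^ 2 * x₂ ^ 6)⁻¹ = ee p (-2) (-6) := by
    rw [e1, e2, ee_pow, ee_pow, ee_mul, ee_inv]; norm_num [nsmul_eq_mul]
  rw [e3, e4, e5, e6, e1, e2]
  refine ⟨⟨?_, ?_, ?_⟩, ⟨?_, ?_, ?_⟩, ?_⟩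
  · intro g hg
    simp only [List.mem_cons, List.not_mem_nil, or_false] at hg
    rcases hg with rfl | rfl | rfl <;> simp [ee_eq_one, h1']
  · refine ee_gen _ (Subgroup.subset_closure ?_) (Subgroup.subset_closure ?_) <;> simp
  · simp only [List.prod_cons, List.prod_nil, mul_one, ee_mul, ee_eq_one]
    constructor <;> ring
  · intro g hg
    simp only [List.mem_cons, List.not_mem_nil, or_false] at hg
    rcases hg with rfl | rfl | rfl <;> simp [ee_eq_one, h1', h2']
  · have ha : ee p 1 2 ∈ Subgroup.closure {g | g ∈ [ee p 1 2, ee p 1 4, ee p (-2) (-6)]} :=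
      Subgroup.subset_closure (by simp)
    have hb : ee p 1 4 ∈ Subgroup.closure {g | g ∈ [ee p 1 2, ee p 1 4, ee p (-2) (-6)]} :=
      Subgroup.subset_closure (by simp)
    have hc : ee p 0 2 ∈ Subgroup.closure {g | g ∈ [ee p 1 2, ee p 1 4, ee p (-2) (-6)]} := by
      have h : ee p 0 2 = ee p 1 4 * (ee p 1 2)⁻¹ := by rw [ee_inv, ee_mul]; norm_num
      rw [h]; exact mul_mem hb (inv_mem ha)
    have hodd : 2 ∣ p + 1 := by
      rcases hp.eq_two_or_odd' with h | ⟨t, ht⟩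
      · omega
      · omega
    refine ee_gen _ ?_ ?_
    · have h : ee p 1 0 = ee p 1 2 * (ee p 0 2)⁻¹ := by rw [ee_inv, ee_mul]; norm_num
      rw [h]; exact mul_mem ha (inv_mem hc)
    · have h : ee p 0 1 = ee p 0 2 ^ ((p + 1) / 2) := by
        rw [ee_pow]
        refine (ee_inj.2 ⟨by simp, ?_⟩).symm
        rw [nsmul_eq_mul]
        have h2p : (p + 1) / 2 * 2 = p + 1 := Nat.div_mul_cancel hodd
        calc ((((p + 1) / 2 : ℕ)) : ZMod p) * 2 = (((p + 1) / 2 * 2 : ℕ) : ZMod p) := by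
              push_cast; ring
          _ = ((p + 1 : ℕ) : ZMod p) := by rw [h2p]
          _ = 1 := by push_cast [ZMod.natCast_self]; ring
      rw [h]; exact pow_mem hc _
  · simp only [List.prod_cons, List.prod_nil, mul_one, ee_mul, ee_eq_one]
    constructor <;> ring
  · ext x
    simp only [SigmaSet, Set.mem_inter_iff, Set.mem_setOf_eq, Set.mem_singleton_iff]
    constructor
    · rintro ⟨⟨t, ht, c, k, rfl⟩, s, hs, d, m, hx⟩
      have hcomm : ∀ (c g : Multiplicative (ZMod p) × Multiplicative (ZMod p)),
          c * g * c⁻¹ = g := fun c g => by rw [mul_comm c g, mul_inv_cancel_right]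
      rw [hcomm] at hx ⊢
      rw [hcomm] at hx
      simp only [List.mem_cons, List.not_mem_nil, or_false] at ht hs
      rcases ht with rfl | rfl | rfl <;> rcases hs with rfl | rfl | rfl <;>
        (rw [ee_zpow, ee_zpow] at hx
         obtain ⟨u, v⟩ := ee_inj.1 hx
         rw [ee_zpow, ee_eq_one]
         simp only [zsmul_eq_mul, mul_one, mul_zero, mul_neg, neg_neg] at u v ⊢)
      · exact ⟨u.trans (mzero h2' v.symm), trivial⟩
      · exact ⟨u.trans (mzero h4' v.symm), trivial⟩
      · have hM := mzero h6' (neg_eq_zero.1 v.symm)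
        exact ⟨by rw [u, hM]; ring, trivial⟩
      · exact ⟨trivial, by rw [v, ← u]; ring⟩
      · exact ⟨trivial, by rw [v, ← u]; ring⟩
      · have hM := mzero h2' (neg_eq_zero.1 u.symm)
        exact ⟨trivial, by rw [v, hM]; ring⟩
      · have hM : (m : ZMod p) = 0 := mzero h1' (by linear_combination u - v)
        exact ⟨u.trans hM, u.trans hM⟩
      · have hM : (m : ZMod p) = 0 := mzero h3' (by linear_combination u - v)
        exact ⟨u.trans hM, u.trans hM⟩
      · have hM : (m : ZMod p) = 0 := mzero h4' (by linear_combination v - u)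
        have hk : -(k : ZMod p) = 0 := by rw [u, hM]; ring
        exact ⟨hk, hk⟩
    · rintro rfl
      exact ⟨⟨ee p 1 0, by simp, 1, 0, by simp⟩, ⟨ee p 1 2, by simp, 1, 0, by simp⟩⟩
end

section
/- The group C₃ × C₃ admits a ramification structure of size (4,4); explicitly, with generators x₁, x₂, the tuples T₁ = (x₁, x₁⁻¹, x₂, x₂⁻¹) and T₂ = (x₁x₂, (x₁x₂)⁻¹, x₁x₂², (x₁x₂²)⁻¹) form a ramification structure. -/
abbrev G3 := Multiplicative (ZMod 3) × Multiplicative (ZMod 3)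

lemma cube3 : ∀ t : G3, t ^ (3:ℕ) = 1 := by decide

lemma zpow_cases (t : G3) (k : ℤ) : t ^ k = 1 ∨ t ^ k = t ∨ t ^ k = t * t := by
  have h3 : ∀ s : G3, s ^ (3:ℤ) = 1 := fun s => by
    rw [show (3:ℤ) = ((3:ℕ):ℤ) by norm_num, zpow_natCast]; exact cube3 s
  have hk : t ^ k = t ^ (k % 3) := by
    conv_lhs => rw [← Int.mul_ediv_add_emod k 3]
    rw [zpow_add, mul_comm (3:ℤ), zpow_mul, h3 _, one_mul]
  have h0 : 0 ≤ k % 3 := Int.emod_nonneg k (by norm_num)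
  have h2 : k % 3 < 3 := Int.emod_lt_of_pos k (by norm_num)
  have : k % 3 = 0 ∨ k % 3 = 1 ∨ k % 3 = 2 := by omega
  rcases this with h | h | h <;> rw [hk, h]
  · left; exact zpow_zero t
  · right; left; exact zpow_one t
  · right; right; rw [show (2:ℤ) = 1 + 1 by norm_num, zpow_add, zpow_one]

lemma mem_sigma {T : List G3} {x : G3} (h : x ∈ SigmaSet T) :
    ∃ t ∈ T, x = 1 ∨ x = t ∨ x = t * t := by
  obtain ⟨t, ht, c, k, rfl⟩ := h
  refine ⟨t, ht, ?_⟩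
  rw [mul_right_comm, mul_inv_cancel, one_mul]
  exact zpow_cases t k

lemma decomp : ∀ g : G3, ∃ m n : Fin 3,
    g = ((Multiplicative.ofAdd 1, 1) : G3) ^ (m:ℕ) *
        ((1, Multiplicative.ofAdd 1) : G3) ^ (n:ℕ) := by decide

set_option maxHeartbeats 1000000 in
set_option synthInstance.maxSize 400 in
set_option synthInstance.maxHeartbeats 400000 in
lemma key_s7 : ∀ x t₁ t₂ : G3,
    t₁ ∈ [((Multiplicative.ofAdd 1, 1) : G3), (Multiplicative.ofAdd 1, 1)⁻¹,
          (1, Multiplicative.ofAdd 1), (1, Multiplicative.ofAdd 1)⁻¹] →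
    t₂ ∈ [((Multiplicative.ofAdd 1, 1) : G3) * (1, Multiplicative.ofAdd 1),
          (((Multiplicative.ofAdd 1, 1) : G3) * (1, Multiplicative.ofAdd 1))⁻¹,
          ((Multiplicative.ofAdd 1, 1) : G3) * (1, Multiplicative.ofAdd 1) ^ 2,
          (((Multiplicative.ofAdd 1, 1) : G3) * (1, Multiplicative.ofAdd 1) ^ 2)⁻¹] →
    (x = 1 ∨ x = t₁ ∨ x = t₁ * t₁) → (x = 1 ∨ x = t₂ ∨ x = t₂ * t₂) → x = 1 := by
  decide

theorem stmt_7 :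
    let x₁ : Multiplicative (ZMod 3) × Multiplicative (ZMod 3) :=
      (Multiplicative.ofAdd 1, 1)
    let x₂ : Multiplicative (ZMod 3) × Multiplicative (ZMod 3) :=
      (1, Multiplicative.ofAdd 1)
    IsRamificationStructure [x₁, x₁⁻¹, x₂, x₂⁻¹]
      [x₁ * x₂, (x₁ * x₂)⁻¹, x₁ * x₂ ^ 2, (x₁ * x₂ ^ 2)⁻¹] := by
  intro x₁ x₂
  have hdec := decomp
  refine ⟨⟨by decide, ?_, by decide⟩, ⟨by decide, ?_, by decide⟩, ?_⟩
  · rw [eq_top_iff]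
    rintro g -
    have hx1 : x₁ ∈ Subgroup.closure {g : G3 | g ∈ [x₁, x₁⁻¹, x₂, x₂⁻¹]} :=
      Subgroup.subset_closure (by simp)
    have hx2 : x₂ ∈ Subgroup.closure {g : G3 | g ∈ [x₁, x₁⁻¹, x₂, x₂⁻¹]} :=
      Subgroup.subset_closure (by simp)
    obtain ⟨m, n, rfl⟩ := hdec g
    exact mul_mem (pow_mem hx1 m) (pow_mem hx2 n)
  · rw [eq_top_iff]
    rintro g -
    set S := {g : G3 | g ∈ [x₁ * x₂, (x₁ * x₂)⁻¹, x₁ * x₂ ^ 2, (x₁ * x₂ ^ 2)⁻¹]}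
    have hg1 : x₁ * x₂ ∈ Subgroup.closure S := Subgroup.subset_closure (by simp [S])
    have hg2 : x₁ * x₂ ^ 2 ∈ Subgroup.closure S := Subgroup.subset_closure (by simp [S])
    have hx1 : x₁ ∈ Subgroup.closure S := by
      have : x₁ = (x₁ * x₂) ^ 2 * (x₁ * x₂ ^ 2) ^ 2 := by decide
      rw [this]; exact mul_mem (pow_mem hg1 2) (pow_mem hg2 2)
    have hx2 : x₂ ∈ Subgroup.closure S := by
      have : x₂ = (x₁ * x₂) ^ 2 * (x₁ * x₂ ^ 2) := by decide
      rw [this]; exact mul_mem (pow_mem hg1 2) hg2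
    obtain ⟨m, n, rfl⟩ := hdec g
    exact mul_mem (pow_mem hx1 m) (pow_mem hx2 n)
  · ext x
    simp only [Set.mem_inter_iff, Set.mem_singleton_iff]
    constructor
    · rintro ⟨h1, h2⟩
      obtain ⟨t₁, ht₁, hc₁⟩ := mem_sigma h1
      obtain ⟨t₂, ht₂, hc₂⟩ := mem_sigma h2
      exact key_s7 x t₁ t₂ ht₁ ht₂ hc₁ hc₂
    · rintro rfl
      exact ⟨⟨x₁, by simp, 1, 0, by simp⟩, ⟨x₁ * x₂, by simp, 1, 0, by simp⟩⟩
end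

section
/- The group C₂ × C₂ × C₂ × C₂ admits a ramification structure of size (5,5); explicitly, with generators x₁,…,x₄, the tuples T₁ = (x₁, x₂, x₃, x₄, (x₁x₂x₃x₄)⁻¹) and T₂ = (x₁x₂, x₂x₃, x₃x₄, x₁x₂x₃, x₂x₃x₄) form a ramification structure. -/
lemma aux_zpow_of_sq {G : Type*} [CommGroup G] {t : G} (h : t * t = 1) (k : ℤ) :
    t ^ k = 1 ∨ t ^ k = t := by
  rcases Int.even_or_odd k with ⟨m, rfl⟩ | ⟨m, rfl⟩
  · left; rw [zpow_add, ← mul_zpow, h, one_zpow]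
  · right; rw [zpow_add, zpow_one, two_mul, zpow_add, ← mul_zpow, h, one_zpow, one_mul]

lemma aux_sigma_mem {G : Type*} [CommGroup G] {T : List G} (h2 : ∀ t ∈ T, t * t = 1)
    {y : G} (hy : y ∈ SigmaSet T) : y = 1 ∨ y ∈ T := by
  obtain ⟨t, ht, c, k, rfl⟩ := hy
  have hc : c * t ^ k * c⁻¹ = t ^ k := by
    rw [mul_comm c, mul_assoc, mul_inv_cancel, mul_one]
  rw [hc]
  rcases aux_zpow_of_sq (h2 t ht) k with h | h
  · exact Or.inl h
  · right; rw [h]; exact ht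

lemma aux_one_mem {G : Type*} [Group G] {T : List G} {t : G} (ht : t ∈ T) :
    (1 : G) ∈ SigmaSet T :=
  ⟨t, ht, 1, 0, by simp⟩

lemma aux_closure_top (S : Set (Multiplicative (Fin 4 → ZMod 2)))
    (h : ∀ i : Fin 4, Multiplicative.ofAdd (Pi.single i (1 : ZMod 2)) ∈ Subgroup.closure S) :
    Subgroup.closure S = ⊤ := by
  rw [eq_top_iff]
  intro g _
  have h1 : ∀ (i : Fin 4) (a : ZMod 2), Multiplicative.ofAdd (Pi.single i a : Fin 4 → ZMod 2)
      = (Multiplicative.ofAdd (Pi.single i (1 : ZMod 2) : Fin 4 → ZMod 2)) ^ a.val := by decide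
  have hg : g = ∏ i : Fin 4,
      Multiplicative.ofAdd (Pi.single i (Multiplicative.toAdd g i)) := by
    apply Multiplicative.toAdd.injective
    simp only [toAdd_prod, toAdd_ofAdd]
    rw [Finset.univ_sum_single]
  rw [hg]
  refine Subgroup.prod_mem _ fun i _ => ?_
  rw [h1]
  exact Subgroup.pow_mem _ (h i) _

theorem stmt_8 :
    let x : Fin 4 → Multiplicative (Fin 4 → ZMod 2) :=
      fun i => Multiplicative.ofAdd (Pi.single i 1)
    IsRamificationStructure
      [x 0, x 1, x 2, x 3, (x 0 * x 1 * x 2 * x 3)⁻¹]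
      [x 0 * x 1, x 1 * x 2, x 2 * x 3, x 0 * x 1 * x 2, x 1 * x 2 * x 3] := by
  intro x
  have hx : x = fun i => Multiplicative.ofAdd (Pi.single i 1) := rfl
  refine ⟨⟨?_, ?_, ?_⟩, ⟨?_, ?_, ?_⟩, ?_⟩
  · rw [hx]; decide
  · apply aux_closure_top
    intro i
    fin_cases i <;>
      exact Subgroup.subset_closure (by rw [hx]; simp)
  · rw [hx]; decide
  · rw [hx]; decide
  · apply aux_closure_top
    have ha : (x 0 * x 1) ∈ Subgroup.closure {g | g ∈ [x 0 * x 1, x 1 * x 2, x 2 * x 3, x 0 * x 1 * x 2, x 1 * x 2 * x 3]} :=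
      Subgroup.subset_closure (by simp)
    have hb : (x 1 * x 2) ∈ Subgroup.closure {g | g ∈ [x 0 * x 1, x 1 * x 2, x 2 * x 3, x 0 * x 1 * x 2, x 1 * x 2 * x 3]} :=
      Subgroup.subset_closure (by simp)
    have hc : (x 2 * x 3) ∈ Subgroup.closure {g | g ∈ [x 0 * x 1, x 1 * x 2, x 2 * x 3, x 0 * x 1 * x 2, x 1 * x 2 * x 3]} :=
      Subgroup.subset_closure (by simp)
    have hd : (x 0 * x 1 * x 2) ∈ Subgroup.closure {g | g ∈ [x 0 * x 1, x 1 * x 2, x 2 * x 3, x 0 * x 1 * x 2, x 1 * x 2 * x 3]} :=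
      Subgroup.subset_closure (by simp)
    intro i
    fin_cases i
    · show Multiplicative.ofAdd (Pi.single (0 : Fin 4) (1 : ZMod 2)) ∈ Subgroup.closure {g | g ∈ [x 0 * x 1, x 1 * x 2, x 2 * x 3, x 0 * x 1 * x 2, x 1 * x 2 * x 3]}
      have : Multiplicative.ofAdd (Pi.single (0 : Fin 4) (1 : ZMod 2))
          = (x 1 * x 2) * (x 0 * x 1 * x 2) := by rw [hx]; decide
      rw [this]; exact Subgroup.mul_mem _ hb hd
    · show Multiplicative.ofAdd (Pi.single (1 : Fin 4) (1 : ZMod 2)) ∈ Subgroup.closure {g | g ∈ [x 0 * x 1, x 1 * x 2, x 2 * x 3, x 0 * x 1 * x 2, x 1 * x 2 * x 3]}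
      have : Multiplicative.ofAdd (Pi.single (1 : Fin 4) (1 : ZMod 2))
          = (x 0 * x 1) * (x 1 * x 2) * (x 0 * x 1 * x 2) := by rw [hx]; decide
      rw [this]; exact Subgroup.mul_mem _ (Subgroup.mul_mem _ ha hb) hd
    · show Multiplicative.ofAdd (Pi.single (2 : Fin 4) (1 : ZMod 2)) ∈ Subgroup.closure {g | g ∈ [x 0 * x 1, x 1 * x 2, x 2 * x 3, x 0 * x 1 * x 2, x 1 * x 2 * x 3]}
      have : Multiplicative.ofAdd (Pi.single (2 : Fin 4) (1 : ZMod 2))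
          = (x 0 * x 1) * (x 0 * x 1 * x 2) := by rw [hx]; decide
      rw [this]; exact Subgroup.mul_mem _ ha hd
    · show Multiplicative.ofAdd (Pi.single (3 : Fin 4) (1 : ZMod 2)) ∈ Subgroup.closure {g | g ∈ [x 0 * x 1, x 1 * x 2, x 2 * x 3, x 0 * x 1 * x 2, x 1 * x 2 * x 3]}
      have : Multiplicative.ofAdd (Pi.single (3 : Fin 4) (1 : ZMod 2))
          = (x 0 * x 1) * (x 2 * x 3) * (x 0 * x 1 * x 2) := by rw [hx]; decide
      rw [this]; exact Subgroup.mul_mem _ (Subgroup.mul_mem _ ha hc) hd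
  · rw [hx]; decide
  · ext y
    simp only [Set.mem_inter_iff, Set.mem_singleton_iff]
    constructor
    · rintro ⟨h1, h2⟩
      have hsq : ∀ g : Multiplicative (Fin 4 → ZMod 2), g * g = 1 := by decide
      rcases aux_sigma_mem (fun t _ => hsq t) h1 with rfl | m1
      · rfl
      rcases aux_sigma_mem (fun t _ => hsq t) h2 with rfl | m2
      · rfl
      exfalso
      simp only [List.mem_cons, List.not_mem_nil, or_false, hx] at m1 m2
      rcases m1 with rfl | rfl | rfl | rfl | rfl <;> revert m2 <;> decide
    · rintro rfl
      exact ⟨aux_one_mem List.mem_cons_self, aux_one_mem List.mem_cons_self⟩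
end

section
/- The group C₂ × C₂ × C₂ admits a ramification structure of size (5,6); explicitly, T₁ = (x₁x₂, x₁x₃, x₂x₃, x₁x₂x₃, x₁x₂x₃) and T₂ = (x₁, x₂, x₃, x₁, x₂, x₃) form a ramification structure. -/
lemma sigma_eq {G : Type*} [CommGroup G] (h : ∀ g : G, g * g = 1) (T : List G) :
    SigmaSet T = {x : G | ∃ t ∈ T, x = 1 ∨ x = t} := by
  ext y
  constructor
  · rintro ⟨t, ht, c, k, rfl⟩
    refine ⟨t, ht, ?_⟩
    have hc : c * t ^ k * c⁻¹ = t ^ k := by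
      rw [mul_comm c (t ^ k), mul_assoc, mul_inv_cancel, mul_one]
    rw [hc]
    rcases Int.even_or_odd k with ⟨m, rfl⟩ | ⟨m, rfl⟩
    · left
      rw [zpow_add]
      exact h _
    · right
      rw [zpow_add, zpow_one, show (2 : ℤ) * m = m + m by ring, zpow_add]
      rw [h (t ^ m), one_mul]
  · rintro ⟨t, ht, rfl | rfl⟩
    · exact ⟨t, ht, 1, 0, by simp⟩
    · exact ⟨y, ht, 1, 1, by simp⟩

theorem stmt_9 :
    let x : Fin 3 → Multiplicative (Fin 3 → ZMod 2) :=
      fun i => Multiplicative.ofAdd (Pi.single i 1)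
    IsRamificationStructure
      [x 0 * x 1, x 0 * x 2, x 1 * x 2, x 0 * x 1 * x 2, x 0 * x 1 * x 2]
      [x 0, x 1, x 2, x 0, x 1, x 2] := by
  intro x
  have hsq : ∀ g : Multiplicative (Fin 3 → ZMod 2), g * g = 1 := by decide
  have htop : Subgroup.closure {g | g ∈ [x 0, x 1, x 2]} = ⊤ := by
    rw [Subgroup.eq_top_iff']
    intro g
    have hg : g = x 0 ^ (g.toAdd 0).val * x 1 ^ (g.toAdd 1).val *
        x 2 ^ (g.toAdd 2).val := by revert g; decide
    rw [hg]
    refine mul_mem (mul_mem (pow_mem ?_ _) (pow_mem ?_ _)) (pow_mem ?_ _) <;>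
      exact Subgroup.subset_closure (by simp)
  refine ⟨⟨by decide, ?_, by decide⟩, ⟨by decide, ?_, by decide⟩, ?_⟩
  · rw [eq_top_iff, ← htop]
    rw [Subgroup.closure_le]
    intro g hg
    simp only [Set.mem_setOf_eq, List.mem_cons, List.not_mem_nil, or_false] at hg
    have h0 : x 0 = (x 0 * x 1 * x 2) * (x 1 * x 2) := by decide
    have h1 : x 1 = (x 0 * x 1 * x 2) * (x 0 * x 2) := by decide
    have h2 : x 2 = (x 0 * x 1 * x 2) * (x 0 * x 1) := by decide
    have hA : x 0 * x 1 * x 2 ∈ Subgroup.closure {g | g ∈ [x 0 * x 1, x 0 * x 2, x 1 * x 2,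
        x 0 * x 1 * x 2, x 0 * x 1 * x 2]} := Subgroup.subset_closure (by simp)
    have hB : x 1 * x 2 ∈ Subgroup.closure {g | g ∈ [x 0 * x 1, x 0 * x 2, x 1 * x 2,
        x 0 * x 1 * x 2, x 0 * x 1 * x 2]} := Subgroup.subset_closure (by simp)
    have hC : x 0 * x 2 ∈ Subgroup.closure {g | g ∈ [x 0 * x 1, x 0 * x 2, x 1 * x 2,
        x 0 * x 1 * x 2, x 0 * x 1 * x 2]} := Subgroup.subset_closure (by simp)
    have hD : x 0 * x 1 ∈ Subgroup.closure {g | g ∈ [x 0 * x 1, x 0 * x 2, x 1 * x 2,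
        x 0 * x 1 * x 2, x 0 * x 1 * x 2]} := Subgroup.subset_closure (by simp)
    rcases hg with rfl | rfl | rfl
    · have := mul_mem hA hB; rw [← h0] at this; exact this
    · have := mul_mem hA hC; rw [← h1] at this; exact this
    · have := mul_mem hA hD; rw [← h2] at this; exact this
  · rw [eq_top_iff, ← htop]
    rw [Subgroup.closure_le]
    intro g hg
    refine Subgroup.subset_closure ?_
    simp only [Set.mem_setOf_eq, List.mem_cons] at hg ⊢
    tauto
  · rw [sigma_eq hsq, sigma_eq hsq]
    ext y
    simp only [Set.mem_inter_iff, Set.mem_setOf_eq, Set.mem_singleton_iff]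
    revert y
    decide
end

section
/- If an elementary abelian p-group G with p odd admits a ramification structure of size (r₁, r₂), then G also admits one of size (r₁+1, r₂). -/
theorem stmt_10 {G : Type*} [CommGroup G] [Finite G] (p : ℕ) (hp : p.Prime)
    (hodd : Odd p) (hG : ∀ g : G, g ^ p = 1) (r₁ r₂ : ℕ)
    (h : ∃ T₁ T₂ : List G, T₁.length = r₁ ∧ T₂.length = r₂ ∧
      IsRamificationStructure T₁ T₂) :
    ∃ T₁ T₂ : List G, T₁.length = r₁ + 1 ∧ T₂.length = r₂ ∧
      IsRamificationStructure T₁ T₂ := by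
  obtain ⟨T₁, T₂, hl1, hl2, ⟨hnt1, hcl1, hpr1⟩, hS2, hint⟩ := h
  -- T₁ is nonempty since 1 ∈ Σ(T₁)
  have h1 : (1 : G) ∈ SigmaSet T₁ ∩ SigmaSet T₂ := by rw [hint]; rfl
  obtain ⟨t₀, ht₀, -⟩ := h1.1
  obtain ⟨t, rest⟩ : ∃ t rest, T₁ = t :: rest := by
    cases T₁ with
    | nil => exact absurd ht₀ List.not_mem_nil
    | cons a l => exact ⟨a, l, rfl⟩
  obtain ⟨rest, rfl⟩ := rest
  obtain ⟨m, hm⟩ := hodd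
  set a : ℕ := m + 1 with ha_def
  have h2a : 2 * a = p + 1 := by omega
  have htmem : t ∈ t :: rest := List.mem_cons_self
  have htne : t ≠ 1 := hnt1 t htmem
  have hta2 : (t ^ a) ^ 2 = t := by
    rw [← pow_mul, mul_comm, h2a, pow_succ, hG t, one_mul]
  have htane : t ^ a ≠ 1 := by
    intro hcon
    apply htne
    rw [← hta2, hcon, one_pow]
  have hkey : t ∈ Subgroup.closure {g : G | g ∈ t ^ a :: t ^ a :: rest} := by
    have h' := pow_mem (Subgroup.subset_closure
      (show t ^ a ∈ {g : G | g ∈ t ^ a :: t ^ a :: rest} by simp)) 2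
    rwa [hta2] at h'
  refine ⟨t ^ a :: t ^ a :: rest, T₂, by simp [← hl1], hl2, ?_, hS2, ?_⟩
  · refine ⟨?_, ?_, ?_⟩
    · intro g hg
      rcases List.mem_cons.mp hg with rfl | hg'
      · exact htane
      · rcases List.mem_cons.mp hg' with rfl | hg''
        · exact htane
        · exact hnt1 g (List.mem_cons_of_mem _ hg'')
    · rw [eq_top_iff, ← hcl1, Subgroup.closure_le]
      intro g hg
      rcases List.mem_cons.mp hg with rfl | hg'
      · exact hkey
      · exact Subgroup.subset_closure (by simp [hg'])
    · have : (t ^ a :: t ^ a :: rest).prod = (t ^ a) ^ 2 * rest.prod := by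
        simp [List.prod_cons, pow_two, mul_assoc]
      rw [this, hta2, ← List.prod_cons, hpr1]
  · have hsub : SigmaSet (t ^ a :: t ^ a :: rest) ⊆ SigmaSet (t :: rest) := by
      rintro x ⟨s, hs, c, k, rfl⟩
      rcases List.mem_cons.mp hs with rfl | hs'
      · exact ⟨t, htmem, c, (a : ℤ) * k, by rw [← zpow_natCast t a, ← zpow_mul]⟩
      · rcases List.mem_cons.mp hs' with rfl | hs''
        · exact ⟨t, htmem, c, (a : ℤ) * k, by rw [← zpow_natCast t a, ← zpow_mul]⟩
        · exact ⟨s, List.mem_cons_of_mem _ hs'', c, k, rfl⟩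
    ext x
    simp only [Set.mem_inter_iff, Set.mem_singleton_iff]
    constructor
    · rintro ⟨hx1, hx2⟩
      have : x ∈ SigmaSet (t :: rest) ∩ SigmaSet T₂ := ⟨hsub hx1, hx2⟩
      rwa [hint] at this
    · rintro rfl
      have h1' : (1 : G) ∈ SigmaSet T₂ := by
        have : (1 : G) ∈ SigmaSet (t :: rest) ∩ SigmaSet T₂ := by rw [hint]; rfl
        exact this.2
      exact ⟨⟨t ^ a, List.mem_cons_self, 1, 0, by simp⟩, h1'⟩
end

section
/- If an elementary abelian 2-group G admits a ramification structure of size (r₁, r₂), then G also admits one of size (r₁+2, r₂). -/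
theorem stmt_11 {G : Type*} [CommGroup G] [Finite G]
    (hG : ∀ g : G, g ^ 2 = 1) (r₁ r₂ : ℕ)
    (h : ∃ T₁ T₂ : List G, T₁.length = r₁ ∧ T₂.length = r₂ ∧
      IsRamificationStructure T₁ T₂) :
    ∃ T₁ T₂ : List G, T₁.length = r₁ + 2 ∧ T₂.length = r₂ ∧
      IsRamificationStructure T₁ T₂ := by
  obtain ⟨T₁, T₂, hl₁, hl₂, ⟨hnt₁, hcl₁, hp₁⟩, hS₂, hint⟩ := h
  -- T₁ is nonempty since 1 ∈ Σ(T₁)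
  have h1 : (1 : G) ∈ SigmaSet T₁ ∩ SigmaSet T₂ := by rw [hint]; rfl
  obtain ⟨t, ht, -⟩ := h1.1
  refine ⟨T₁ ++ [t, t], T₂, by simp [hl₁], hl₂, ?_, hS₂, ?_⟩
  · refine ⟨?_, ?_, ?_⟩
    · intro g hg
      rcases List.mem_append.1 hg with hg | hg
      · exact hnt₁ g hg
      · simp only [List.mem_cons, List.not_mem_nil, or_false] at hg
        rcases hg with rfl | rfl <;> exact hnt₁ g ht
    · rw [eq_top_iff, ← hcl₁]
      exact Subgroup.closure_mono (fun g hg => List.mem_append.2 (Or.inl hg))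
    · have : t * t = 1 := by rw [← pow_two]; exact hG t
      simp [List.prod_append, hp₁, this]
  · have hSeq : SigmaSet (T₁ ++ [t, t]) = SigmaSet T₁ := by
      ext x
      constructor
      · rintro ⟨s, hs, c, k, rfl⟩
        rcases List.mem_append.1 hs with hs | hs
        · exact ⟨s, hs, c, k, rfl⟩
        · simp only [List.mem_cons, List.not_mem_nil, or_false] at hs
          rcases hs with rfl | rfl <;> exact ⟨s, ht, c, k, rfl⟩
      · rintro ⟨s, hs, c, k, rfl⟩
        exact ⟨s, List.mem_append.2 (Or.inl hs), c, k, rfl⟩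
    rw [hSeq]; exact hint
end

section
/- If G is an elementary abelian p-group of rank d admitting a ramification structure of size (r₁, r₂) with r₁, r₂ ≥ d+2, and G* is an elementary abelian p-group of rank d+1, then G* admits a ramification structure of size (r₁, r₂). -/
open Multiplicative Module

section helpers
variable {p d : ℕ}

lemma snoc_add (v w : Fin d → ZMod p) (x y : ZMod p) :
    (Fin.snoc v x : Fin (d+1) → ZMod p) + Fin.snoc w y = Fin.snoc (v + w) (x + y) := by
  funext m
  refine Fin.lastCases ?_ ?_ m <;> simp

lemma snoc_nsmul (n : ℕ) (v : Fin d → ZMod p) (x : ZMod p) :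
    n • (Fin.snoc v x : Fin (d+1) → ZMod p) = Fin.snoc (n • v) (n • x) := by
  funext m
  refine Fin.lastCases ?_ ?_ m <;> simp

lemma snoc_zero : (Fin.snoc 0 0 : Fin (d+1) → ZMod p) = 0 := by
  funext m
  refine Fin.lastCases ?_ ?_ m <;> simp

/-- the embedding as an additive hom -/
def iota (p d : ℕ) : (Fin d → ZMod p) →+ (Fin (d+1) → ZMod p) where
  toFun v := Fin.snoc v 0
  map_zero' := snoc_zero
  map_add' v w := by rw [snoc_add, add_zero]

lemma init_zsmul (k : ℤ) (w : Fin (d+1) → ZMod p) :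
    Fin.init (k • w) = k • Fin.init w := by
  funext j; simp [Fin.init]

lemma psmul_eq_zero (hp : p.Prime) (v : Fin d → ZMod p) : p • v = 0 := by
  funext i
  simp [nsmul_eq_mul, ZMod.natCast_self]

lemma zsmul_eq_zero_of_dvd (hp : p.Prime) {k : ℤ} (hk : (p : ℤ) ∣ k) (v : Fin d → ZMod p) :
    k • v = 0 := by
  obtain ⟨m, rfl⟩ := hk
  rw [mul_smul]
  rw [show ((p : ℤ) • (m • v)) = p • (m • v) from natCast_zsmul _ _, psmul_eq_zero hp]

lemma dvd_of_zsmul_eq_zero (hp : p.Prime) {k : ℤ} {v : Fin d → ZMod p} (hv : v ≠ 0)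
    (h : k • v = 0) : (p : ℤ) ∣ k := by
  have h1 : addOrderOf v ∣ p := addOrderOf_dvd_of_nsmul_eq_zero (psmul_eq_zero hp v)
  have h2 : addOrderOf v ≠ 1 := fun hc => hv (AddMonoid.addOrderOf_eq_one_iff.mp hc)
  have : addOrderOf v = p := ((Nat.Prime.eq_one_or_self_of_dvd hp _ h1).resolve_left h2)
  rw [← this]
  exact_mod_cast addOrderOf_dvd_iff_zsmul_eq_zero.2 h


lemma sum_snoc {r : ℕ} (t : Fin r → Fin d → ZMod p) (a : Fin r → ZMod p) :
    (∑ i, (Fin.snoc (t i) (a i) : Fin (d+1) → ZMod p)) = Fin.snoc (∑ i, t i) (∑ i, a i) := by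
  funext m
  refine Fin.lastCases ?_ ?_ m <;> simp [Finset.sum_apply]

end helpers


lemma exists_ak {p r d : ℕ} [Fact p.Prime] (hr : d + 2 ≤ r) (t : Fin r → (Fin d → ZMod p)) :
    ∃ a k : Fin r → ZMod p,
      (∑ i, a i = 0) ∧ (∑ i, k i • t i = 0) ∧ (∑ i, k i * a i ≠ 0) := by
  let L : (Fin r → ZMod p) →ₗ[ZMod p] (Fin d → ZMod p) := Fintype.linearCombination (ZMod p) t
  have i0 : Fin r := ⟨0, by omega⟩
  have hone : (fun _ => 1 : Fin r → ZMod p) ≠ 0 := by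
    intro hc
    exact one_ne_zero (congrFun hc i0)
  have hrank : 2 ≤ finrank (ZMod p) (LinearMap.ker L) := by
    have h1 := LinearMap.finrank_range_add_finrank_ker L
    have h2 : finrank (ZMod p) (Fin r → ZMod p) = r := by
      simp [Module.finrank_fintype_fun_eq_card]
    have h3 : finrank (ZMod p) (LinearMap.range L) ≤ d := by
      have := Submodule.finrank_le (LinearMap.range L)
      simpa [Module.finrank_fintype_fun_eq_card] using this
    omega
  have hnc : ∃ k ∈ LinearMap.ker L, ∃ i j, k i ≠ k j := by
    by_contra hcon
    push_neg at hcon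
    have hle : LinearMap.ker L ≤ Submodule.span (ZMod p) {(fun _ => 1 : Fin r → ZMod p)} := by
      intro k hk
      have : k = k i0 • (fun _ => 1 : Fin r → ZMod p) := by
        funext i
        simp [hcon k hk i i0]
      rw [this]
      exact Submodule.smul_mem _ _ (Submodule.mem_span_singleton_self _)
    have h4 : finrank (ZMod p) (LinearMap.ker L) ≤ 1 := by
      have := Submodule.finrank_mono hle
      rwa [finrank_span_singleton hone] at this
    omega
  obtain ⟨k, hk, i, j, hij⟩ := hnc
  have hne : i ≠ j := fun hc => hij (by rw [hc])
  refine ⟨Pi.single i (1 : ZMod p) - Pi.single j 1, k, ?_, ?_, ?_⟩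
  · simp [Finset.sum_sub_distrib, Finset.sum_pi_single']
  · simpa [L, Fintype.linearCombination_apply] using hk
  · simp only [Pi.sub_apply, mul_sub, Finset.sum_sub_distrib, Pi.single_apply, mul_ite,
      mul_one, mul_zero, Finset.sum_ite_eq', Finset.mem_univ, if_true]
    intro hc
    exact hij (by rw [sub_eq_zero] at hc; exact hc)

lemma lift_spherical {p d r : ℕ} [Fact p.Prime] (hr : d + 2 ≤ r)
    (T : List (Multiplicative (Fin d → ZMod p))) (hlen : T.length = r)
    (hT : IsSpherical T) :
    ∃ T' : List (Multiplicative (Fin (d + 1) → ZMod p)),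
      T'.length = r ∧ IsSpherical T' ∧
      ∀ g' ∈ T', ∃ g ∈ T, Fin.init g'.toAdd = g.toAdd := by
  classical
  set t : Fin r → (Fin d → ZMod p) := fun i => (T.get (Fin.cast hlen.symm i)).toAdd with ht
  obtain ⟨a, k, ha, hk, hc⟩ := exists_ak hr t
  set c : ZMod p := ∑ i, k i * a i with hcdef
  set f : Fin r → (Fin (d+1) → ZMod p) := fun i => Fin.snoc (t i) (a i) with hf
  refine ⟨List.ofFn (fun i => ofAdd (f i)), by simp, ⟨?_, ?_, ?_⟩, ?_⟩
  · -- nontrivial entries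
    intro g hg hg1
    rw [List.mem_ofFn] at hg
    obtain ⟨i, rfl⟩ := hg
    have h0 : f i = 0 := hg1
    have : t i = 0 := by
      have := congrArg Fin.init h0
      rwa [hf, Fin.init_snoc] at this
      -- Fin.init 0 = 0 might need extra
    exact hT.1 (T.get (Fin.cast hlen.symm i)) (T.get_mem _) (by
      have : (T.get (Fin.cast hlen.symm i)).toAdd = 0 := this
      exact toAdd_eq_zero.mp this)
  · -- generation
    rw [eq_top_iff]
    set H := Subgroup.closure {g : Multiplicative (Fin (d+1) → ZMod p) |
      g ∈ List.ofFn (fun i => ofAdd (f i))} with hH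
    have hgen : ∀ i, ofAdd (f i) ∈ H := fun i =>
      Subgroup.subset_closure (by simp [List.mem_ofFn])
    have hvalsmul : ∀ (M : Type) [inst : AddCommGroup M] [inst2 : Module (ZMod p) M]
        (y : ZMod p) (x : M), (y.val) • x = y • x := by
      intro M _ _ y x
      rw [← Nat.cast_smul_eq_nsmul (ZMod p), ZMod.natCast_val, ZMod.cast_id]
    -- Step A: a pure last-coordinate element with nonzero entry c lies in H
    have hu : ofAdd (Fin.snoc 0 c : Fin (d+1) → ZMod p) ∈ H := by
      have hmem : (∏ i, (ofAdd (f i)) ^ (k i).val) ∈ H :=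
        Subgroup.prod_mem H (fun i _ => Subgroup.pow_mem H (hgen i) _)
      have heq : (∏ i, (ofAdd (f i)) ^ (k i).val) =
          ofAdd (Fin.snoc 0 c : Fin (d+1) → ZMod p) := by
        calc (∏ i, (ofAdd (f i)) ^ (k i).val)
            = ofAdd (∑ i, (k i).val • f i) := by
              rw [ofAdd_sum]
              exact Finset.prod_congr rfl (fun i _ => (ofAdd_nsmul _ _).symm)
          _ = ofAdd (Fin.snoc 0 c : Fin (d+1) → ZMod p) := by
              congr 1
              have : ∀ i, (k i).val • f i =
                  (Fin.snoc ((k i) • t i) ((k i) • a i) : Fin (d+1) → ZMod p) := by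
                intro i
                rw [hf, snoc_nsmul, hvalsmul _ (k i) (t i), hvalsmul _ (k i) (a i)]
              rw [Finset.sum_congr rfl (fun i _ => this i), sum_snoc, hk]
              have hca : (∑ i, k i • a i) = c := by
                simpa [smul_eq_mul] using hcdef.symm
              rw [hca]
      rwa [heq] at hmem
    -- Step B: all pure last-coordinate elements lie in H
    have hcne : c ≠ 0 := hc
    have hB : ∀ x : ZMod p, ofAdd (Fin.snoc 0 x : Fin (d+1) → ZMod p) ∈ H := by
      intro x
      have hmem := Subgroup.pow_mem H hu (x / c).val
      have heq : (ofAdd (Fin.snoc 0 c : Fin (d+1) → ZMod p)) ^ (x / c).val =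
          ofAdd (Fin.snoc 0 x : Fin (d+1) → ZMod p) := by
        rw [← ofAdd_nsmul, snoc_nsmul, smul_zero, hvalsmul _ (x / c) c, smul_eq_mul,
          div_mul_cancel₀ x hcne]
      rwa [heq] at hmem
    -- Step C: lifts (with 0 last coordinate) of the original generators lie in H
    have hJ : ∀ g : Multiplicative (Fin d → ZMod p),
        ofAdd (Fin.snoc g.toAdd 0 : Fin (d+1) → ZMod p) ∈ H := by
      have hcl : Subgroup.closure {g : Multiplicative (Fin d → ZMod p) | g ∈ T} ≤
          Subgroup.comap (AddMonoidHom.toMultiplicative (iota p d)) H := by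
        rw [Subgroup.closure_le]
        intro g hg
        obtain ⟨m, hm⟩ := List.mem_iff_get.mp hg
        set i : Fin r := Fin.cast hlen m with hi
        have him : Fin.cast hlen.symm i = m := by
          ext
          simp [hi]
        have hti : t i = g.toAdd := by
          rw [ht]
          simp only
          rw [him, hm]
        have hsnoc : (Fin.snoc g.toAdd 0 : Fin (d+1) → ZMod p) =
            f i - Fin.snoc (0 : Fin d → ZMod p) (a i) := by
          rw [eq_sub_iff_add_eq, snoc_add, add_zero, zero_add]
          simp only [hf]
          rw [hti]
        show (AddMonoidHom.toMultiplicative (iota p d)) g ∈ H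
        have : (AddMonoidHom.toMultiplicative (iota p d)) g =
            ofAdd (Fin.snoc g.toAdd 0 : Fin (d+1) → ZMod p) := rfl
        rw [this, hsnoc, ofAdd_sub, div_eq_mul_inv]
        exact Subgroup.mul_mem H (hgen i) (Subgroup.inv_mem H (hB (a i)))
      intro g
      have hmem := hcl (by rw [hT.2.1]; exact Subgroup.mem_top g)
      rwa [Subgroup.mem_comap] at hmem
    -- Step E: conclude
    intro g' _
    have hdec : g' = ofAdd ((Fin.snoc (Fin.init g'.toAdd) 0 : Fin (d+1) → ZMod p) +
        Fin.snoc (0 : Fin d → ZMod p) (g'.toAdd (Fin.last d))) := by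
      rw [snoc_add, add_zero, zero_add, Fin.snoc_init_self, ofAdd_toAdd]
    rw [hdec, ofAdd_add]
    have h1 := hJ (ofAdd (Fin.init g'.toAdd))
    rw [toAdd_ofAdd] at h1
    exact Subgroup.mul_mem H h1 (hB _)

  · -- product is 1
    rw [List.prod_ofFn, ← ofAdd_sum]
    have hsumt : ∑ i, t i = 0 := by
      have hprod : T.prod = 1 := hT.2.2
      have : T.prod = ∏ i : Fin r, T.get (Fin.cast hlen.symm i) := by
        conv_lhs => rw [← List.ofFn_get T]
        rw [List.prod_ofFn]
        exact (Fintype.prod_equiv (finCongr hlen.symm) _ _ (fun i => rfl)).symm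
      rw [this] at hprod
      have := congrArg Multiplicative.toAdd hprod
      simpa [toAdd_prod, ht] using this
    rw [hf, sum_snoc, hsumt, ha, snoc_zero, ofAdd_zero]
  · -- init condition
    intro g' hg'
    rw [List.mem_ofFn] at hg'
    obtain ⟨i, rfl⟩ := hg'
    exact ⟨T.get (Fin.cast hlen.symm i), T.get_mem _, by simp [hf, Fin.init_snoc, ht]⟩

lemma comm_conj {A : Type*} [AddCommGroup A] (c g : Multiplicative A) (k : ℤ) :
    c * g ^ k * c⁻¹ = g ^ k := by
  rw [mul_comm c, mul_assoc, mul_inv_cancel, mul_one]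

lemma one_mem_sigma {G : Type*} [Group G] {T : List G} (hT : 0 < T.length) :
    (1 : G) ∈ SigmaSet T := by
  refine ⟨T.get ⟨0, hT⟩, T.get_mem _, 1, 0, by simp⟩


theorem stmt_12 (p : ℕ) (hp : p.Prime) (d r₁ r₂ : ℕ)
    (h₁ : r₁ ≥ d + 2) (h₂ : r₂ ≥ d + 2)
    (h : ∃ T₁ T₂ : List (Multiplicative (Fin d → ZMod p)),
      T₁.length = r₁ ∧ T₂.length = r₂ ∧ IsRamificationStructure T₁ T₂) :
    ∃ T₁ T₂ : List (Multiplicative (Fin (d + 1) → ZMod p)),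
      T₁.length = r₁ ∧ T₂.length = r₂ ∧ IsRamificationStructure T₁ T₂ := by
  haveI : Fact p.Prime := ⟨hp⟩
  obtain ⟨T₁, T₂, hl1, hl2, hS1, hS2, hdisj⟩ := h
  obtain ⟨T₁', hl1', hS1', hinit1⟩ := lift_spherical h₁ T₁ hl1 hS1
  obtain ⟨T₂', hl2', hS2', hinit2⟩ := lift_spherical h₂ T₂ hl2 hS2
  refine ⟨T₁', T₂', hl1', hl2', hS1', hS2', ?_⟩
  ext x
  simp only [Set.mem_inter_iff, Set.mem_singleton_iff]
  constructor
  · rintro ⟨⟨g', hg', c₁, kk, rfl⟩, ⟨h', hh', c₂, l, hxl⟩⟩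
    rw [comm_conj] at hxl ⊢
    rw [comm_conj] at hxl
    obtain ⟨g, hg, hig⟩ := hinit1 g' hg'
    obtain ⟨hh0, hhh, hih⟩ := hinit2 h' hh'
    -- the common projection
    have hproj : kk • g.toAdd = l • hh0.toAdd := by
      have := congrArg (fun y => Fin.init (Multiplicative.toAdd y)) hxl
      simp only [toAdd_zpow] at this
      rwa [init_zsmul, init_zsmul, hig, hih] at this
    have hw1 : (g ^ kk : Multiplicative (Fin d → ZMod p)) ∈ SigmaSet T₁ :=
      ⟨g, hg, 1, kk, by rw [comm_conj]⟩
    have hw2 : (g ^ kk : Multiplicative (Fin d → ZMod p)) ∈ SigmaSet T₂ := by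
      refine ⟨hh0, hhh, 1, l, ?_⟩
      rw [comm_conj]
      have : Multiplicative.toAdd (g ^ kk) = Multiplicative.toAdd (hh0 ^ l) := by
        rw [toAdd_zpow, toAdd_zpow]; exact hproj
      exact Multiplicative.toAdd.injective this
    have hone : (g ^ kk : Multiplicative (Fin d → ZMod p)) = 1 := by
      have := Set.eq_singleton_iff_unique_mem.mp hdisj
      exact this.2 _ ⟨hw1, hw2⟩
    have hzero : kk • g.toAdd = 0 := by
      have := congrArg Multiplicative.toAdd hone
      rwa [toAdd_zpow, toAdd_one] at this
    have hgne : g.toAdd ≠ 0 := fun hcon =>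
      hS1.1 g hg (Multiplicative.toAdd.injective (by rw [hcon, toAdd_one]))
    have hdvd : (p : ℤ) ∣ kk := dvd_of_zsmul_eq_zero hp hgne hzero
    have : Multiplicative.toAdd (g' ^ kk) = 0 := by
      rw [toAdd_zpow]
      exact_mod_cast zsmul_eq_zero_of_dvd hp hdvd g'.toAdd
    exact Multiplicative.toAdd.injective (by rw [this, toAdd_one])
  · rintro rfl
    exact ⟨one_mem_sigma (by omega), one_mem_sigma (by omega)⟩
end

section
/- Let G be a finite p-group of exponent p (p odd). If G/Φ(G) admits a ramification structure of size (r₁, r₂), then so does G. Specifically, any lift of a ramification structure of G/Φ(G) to spherical systems of generators of G is again a ramification structure. -/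
theorem stmt_13 {G : Type*} [Group G] [Finite G] (p : ℕ) (hp : p.Prime)
    (hodd : Odd p) (hexp : ∀ g : G, g ^ p = 1)
    (U₁ U₂ : List (G ⧸ frattini G)) (hU : IsRamificationStructure U₁ U₂)
    (T₁ T₂ : List G)
    (hT₁ : T₁.map (QuotientGroup.mk : G → G ⧸ frattini G) = U₁)
    (hT₂ : T₂.map (QuotientGroup.mk : G → G ⧸ frattini G) = U₂)
    (hs₁ : IsSpherical T₁) (hs₂ : IsSpherical T₂) :
    IsRamificationStructure T₁ T₂ := by
  have hpf : Fact p.Prime := ⟨hp⟩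
  refine ⟨hs₁, hs₂, ?_⟩
  ext x
  simp only [Set.mem_inter_iff, Set.mem_singleton_iff]
  constructor
  · rintro ⟨⟨t, ht, c, k, rfl⟩, ⟨s, hs, d, m, hy⟩⟩
    have htU : (t : G ⧸ frattini G) ∈ U₁ := hT₁ ▸ List.mem_map_of_mem (f := (QuotientGroup.mk : G → G ⧸ frattini G)) ht
    have hsU : (s : G ⧸ frattini G) ∈ U₂ := hT₂ ▸ List.mem_map_of_mem (f := (QuotientGroup.mk : G → G ⧸ frattini G)) hs
    have h1 : ((c * t ^ k * c⁻¹ : G) : G ⧸ frattini G) ∈ SigmaSet U₁ :=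
      ⟨_, htU, (c : G ⧸ frattini G), k, by
        simp [QuotientGroup.mk_mul, QuotientGroup.mk_inv, QuotientGroup.mk_zpow]⟩
    have h2 : ((c * t ^ k * c⁻¹ : G) : G ⧸ frattini G) ∈ SigmaSet U₂ :=
      ⟨_, hsU, (d : G ⧸ frattini G), m, by
        rw [hy]
        simp [QuotientGroup.mk_mul, QuotientGroup.mk_inv, QuotientGroup.mk_zpow]⟩
    have hone : ((c * t ^ k * c⁻¹ : G) : G ⧸ frattini G) = 1 := by
      have := hU.2.2
      have : ((c * t ^ k * c⁻¹ : G) : G ⧸ frattini G) ∈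
          SigmaSet U₁ ∩ SigmaSet U₂ := ⟨h1, h2⟩
      rw [hU.2.2] at this
      exact this
    -- deduce (t : quotient)^k = 1
    have htk : ((t : G ⧸ frattini G)) ^ k = 1 := by
      have h' : (c : G ⧸ frattini G) * (t : G ⧸ frattini G) ^ k *
          (c : G ⧸ frattini G)⁻¹ = 1 := by
        rw [← hone]
        simp [QuotientGroup.mk_mul, QuotientGroup.mk_inv, QuotientGroup.mk_zpow]
      have := congrArg (fun y => (c : G ⧸ frattini G)⁻¹ * y * (c : G ⧸ frattini G)) h'
      simpa [mul_assoc] using this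
    have htne : (t : G ⧸ frattini G) ≠ 1 := hU.1.1 _ htU
    have hord : orderOf (t : G ⧸ frattini G) = p := by
      refine orderOf_eq_prime ?_ htne
      rw [← QuotientGroup.mk_pow, hexp t, QuotientGroup.mk_one]
    have hdvd : (p : ℤ) ∣ k := by
      rw [← hord]
      exact orderOf_dvd_iff_zpow_eq_one.mpr htk
    obtain ⟨n, rfl⟩ := hdvd
    have : t ^ ((p : ℤ) * n) = 1 := by
      rw [zpow_mul, zpow_natCast, hexp t, one_zpow]
    rw [this, mul_one, mul_inv_cancel]
  · rintro rfl
    have h1mem : (1 : G ⧸ frattini G) ∈ SigmaSet U₁ ∩ SigmaSet U₂ := by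
      rw [hU.2.2]; rfl
    obtain ⟨⟨u₁, hu₁, -⟩, ⟨u₂, hu₂, -⟩⟩ := h1mem
    rw [← hT₁] at hu₁
    rw [← hT₂] at hu₂
    obtain ⟨t₁, ht₁, -⟩ := List.mem_map.mp hu₁
    obtain ⟨t₂, ht₂, -⟩ := List.mem_map.mp hu₂
    exact ⟨⟨t₁, ht₁, 1, 0, by simp⟩, ⟨t₂, ht₂, 1, 0, by simp⟩⟩
end

section
/- Let G be a finite p-group of exponent p^e that is semi-p^{e-1}-abelian. If (T₁, T₂) is a ramification structure for G, then the images of T₁ and T₂ in G/Ω_{e-1}(G), after deleting identity entries, form a ramification structure for G/Ω_{e-1}(G). -/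
lemma filter_ne_one_prod {M : Type*} [Monoid M] [DecidableEq M] (L : List M) :
    (L.filter (· ≠ 1)).prod = L.prod := by
  induction L with
  | nil => simp
  | cons a t ih =>
    simp only [ne_eq, decide_not] at ih ⊢
    by_cases ha : a = 1 <;> simp [List.filter_cons, ha, ih]

theorem stmt_15 {G : Type*} [Group G] [Finite G] (p e : ℕ) (hp : p.Prime)
    (he : 1 ≤ e) (hpG : IsPGroup p G) (hexp : Monoid.exponent G = p ^ e)
    (hsemi : ∀ x y : G,
      x ^ p ^ (e - 1) = y ^ p ^ (e - 1) ↔ (x * y⁻¹) ^ p ^ (e - 1) = 1)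
    (Ω : Subgroup G) [Ω.Normal]
    (hΩ : Ω = Subgroup.closure {g : G | g ^ p ^ (e - 1) = 1})
    [DecidableEq (G ⧸ Ω)]
    (T₁ T₂ : List G) (h : IsRamificationStructure T₁ T₂) :
    IsRamificationStructure
      ((T₁.map (QuotientGroup.mk : G → G ⧸ Ω)).filter (· ≠ 1))
      ((T₂.map (QuotientGroup.mk : G → G ⧸ Ω)).filter (· ≠ 1)) := by
  obtain ⟨⟨h1ne, h1gen, h1prod⟩, ⟨h2ne, h2gen, h2prod⟩, hdisj⟩ := h
  set n := p ^ (e - 1) with hn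
  -- Ω is exactly the set of elements killed by n
  have hS : ∀ a b : G, a ^ n = 1 → b ^ n = 1 → (a * b) ^ n = 1 := by
    intro a b ha hb
    have : a ^ n = (b⁻¹) ^ n := by rw [ha, inv_pow, hb, inv_one]
    have := (hsemi a b⁻¹).mp this
    rwa [inv_inv] at this
  let S : Subgroup G :=
    { carrier := {g : G | g ^ n = 1}
      one_mem' := by simp
      mul_mem' := fun ha hb => hS _ _ ha hb
      inv_mem' := fun {a} ha => by
        simp only [Set.mem_setOf_eq] at *
        rw [inv_pow, ha, inv_one] }
  have hmem : ∀ g : G, g ∈ Ω ↔ g ^ n = 1 := by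
    intro g
    have : Ω = S := by rw [hΩ]; exact (Subgroup.closure_eq S)
    rw [this]; rfl
  -- there is an element not killed by n
  have hex : ∃ g : G, g ^ n ≠ 1 := by
    by_contra hall
    push_neg at hall
    have hdvd := Monoid.exponent_dvd_of_forall_pow_eq_one hall
    rw [hexp] at hdvd
    have h1 : p ^ e ≤ p ^ (e - 1) := Nat.le_of_dvd (pow_pos hp.pos _) hdvd
    have h2 : p ^ (e - 1) < p ^ e := Nat.pow_lt_pow_right hp.one_lt (by omega)
    omega
  -- sphericity of the filtered images
  have key : ∀ T : List G, (∀ g ∈ T, g ≠ (1 : G)) →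
      Subgroup.closure {g : G | g ∈ T} = ⊤ → T.prod = 1 →
      IsSpherical ((T.map (QuotientGroup.mk : G → G ⧸ Ω)).filter (· ≠ 1)) := by
    intro T hTne hTgen hTprod
    refine ⟨?_, ?_, ?_⟩
    · intro g hg
      have := List.of_mem_filter hg
      simpa using this
    · rw [eq_top_iff]
      have hmap : (Subgroup.closure {g : G | g ∈ T}).map (QuotientGroup.mk' Ω) = ⊤ := by
        rw [hTgen]
        exact Subgroup.map_top_of_surjective _ (QuotientGroup.mk'_surjective Ω)
      rw [MonoidHom.map_closure] at hmap
      rw [← hmap]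
      apply Subgroup.closure_le _ |>.mpr
      rintro q ⟨t, ht, rfl⟩
      by_cases h1 : (QuotientGroup.mk' Ω) t = 1
      · rw [h1]; exact Subgroup.one_mem _
      · apply Subgroup.subset_closure
        simp only [Set.mem_setOf_eq, List.mem_filter]
        exact ⟨List.mem_map.mpr ⟨t, ht, rfl⟩, by simp only [decide_eq_true_eq, ne_eq]; exact h1⟩
    · rw [filter_ne_one_prod]
      show (T.map ⇑(QuotientGroup.mk' Ω)).prod = 1
      rw [← map_list_prod (QuotientGroup.mk' Ω) T, hTprod, map_one]
  -- nonemptiness of filtered lists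
  have hnonempty : ∀ T : List G, Subgroup.closure {g : G | g ∈ T} = ⊤ →
      ∃ q, q ∈ (T.map (QuotientGroup.mk : G → G ⧸ Ω)).filter (· ≠ 1) := by
    intro T hTgen
    by_contra hempty
    push_neg at hempty
    have hall : ∀ t ∈ T, t ∈ Ω := by
      intro t ht
      by_contra htΩ
      refine hempty (QuotientGroup.mk t) ?_
      refine List.mem_filter.mpr ⟨List.mem_map.mpr ⟨t, ht, rfl⟩, ?_⟩
      simpa [QuotientGroup.eq_one_iff] using htΩ
    have : Subgroup.closure {g : G | g ∈ T} ≤ Ω :=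
      (Subgroup.closure_le _).mpr hall
    rw [hTgen] at this
    obtain ⟨g, hg⟩ := hex
    exact hg ((hmem g).mp (this (Subgroup.mem_top g)))
  refine ⟨key T₁ h1ne h1gen h1prod, key T₂ h2ne h2gen h2prod, ?_⟩
  ext x
  simp only [Set.mem_inter_iff, Set.mem_singleton_iff]
  constructor
  · rintro ⟨⟨t', ht', c', k, rfl⟩, ⟨s', hs', d', m, hx2⟩⟩
    obtain ⟨t, ht, rfl⟩ := List.mem_map.mp (List.mem_filter.mp ht').1
    obtain ⟨s, hs, rfl⟩ := List.mem_map.mp (List.mem_filter.mp hs').1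
    obtain ⟨c, rfl⟩ := QuotientGroup.mk_surjective c'
    obtain ⟨d, rfl⟩ := QuotientGroup.mk_surjective d'
    have hxeq : (QuotientGroup.mk (c * t ^ k * c⁻¹) : G ⧸ Ω)
        = QuotientGroup.mk (d * s ^ m * d⁻¹) := by
      simpa [QuotientGroup.mk_mul, QuotientGroup.mk_inv, QuotientGroup.mk_zpow] using hx2
    have hΩmem : (c * t ^ k * c⁻¹) * (d * s ^ m * d⁻¹)⁻¹ ∈ Ω := by
      rw [← QuotientGroup.eq_one_iff, QuotientGroup.mk_mul, QuotientGroup.mk_inv, hxeq]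
      group
    have hpow : (c * t ^ k * c⁻¹) ^ n = (d * s ^ m * d⁻¹) ^ n :=
      (hsemi _ _).mpr ((hmem _).mp hΩmem)
    have hconj : ∀ (u v : G) (j : ℤ), (u * v ^ j * u⁻¹) ^ n = u * v ^ (j * (n : ℤ)) * u⁻¹ := by
      intro u v j
      rw [zpow_mul, zpow_natCast, conj_pow]
    have hz1 : (c * t ^ k * c⁻¹) ^ n ∈ SigmaSet T₁ :=
      ⟨t, ht, c, k * (n : ℤ), (hconj c t k).symm ▸ rfl⟩
    have hz2 : (c * t ^ k * c⁻¹) ^ n ∈ SigmaSet T₂ :=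
      ⟨s, hs, d, m * (n : ℤ), by rw [hpow, hconj]⟩
    have hz3 : (c * t ^ k * c⁻¹) ^ n = 1 :=
      (Set.ext_iff.mp hdisj _).mp ⟨hz1, hz2⟩
    have : c * t ^ k * c⁻¹ ∈ Ω := (hmem _).mpr hz3
    rw [← QuotientGroup.eq_one_iff] at this
    simpa [QuotientGroup.mk_mul, QuotientGroup.mk_inv, QuotientGroup.mk_zpow] using this
  · rintro rfl
    obtain ⟨q1, hq1⟩ := hnonempty T₁ h1gen
    obtain ⟨q2, hq2⟩ := hnonempty T₂ h2gen
    exact ⟨⟨q1, hq1, 1, 0, by simp⟩, ⟨q2, hq2, 1, 0, by simp⟩⟩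
end

section
/- Let G be a finite p-group of exponent p^e that is semi-p^{e-1}-abelian, with d = d(G). If (U₁, U₂) is a ramification structure of size (r₁, r₂) for G/Ω_{e-1}(G) with r₁, r₂ ≥ d+1, then there is a lift of (U₁, U₂) to G which is a ramification structure of size (r₁, r₂) for G. -/
section AuxLemmas
open Subgroup


lemma aux_quot_subgroup_trivial {G : Type*} [Group G] {M : Subgroup G} [M.Normal]
    (hM : IsCoatom M) (H : Subgroup (G ⧸ M)) : H = ⊥ ∨ H = ⊤ := by
  have hsur := QuotientGroup.mk'_surjective M
  have hmap := Subgroup.map_comap_eq_self_of_surjective hsur H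
  have hle : M ≤ H.comap (QuotientGroup.mk' M) := by
    intro m hm
    have h1 : (QuotientGroup.mk' M) m = 1 := (QuotientGroup.eq_one_iff m).mpr hm
    rw [Subgroup.mem_comap, h1]
    exact H.one_mem
  rcases eq_or_lt_of_le hle with h | h
  · left
    rw [← hmap, ← h]
    refine le_bot_iff.mp ?_
    rintro x ⟨m, hm, rfl⟩
    simpa [Subgroup.mem_bot] using (QuotientGroup.eq_one_iff m).mpr hm
  · right
    rw [← hmap, hM.2 _ h]
    exact Subgroup.map_top_of_surjective _ hsur

lemma aux_pow_comm_of_subgroups_trivial {Q : Type*} [Group Q] {p : ℕ} (hp : p.Prime)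
    (hpQ : IsPGroup p Q) (htriv : ∀ H : Subgroup Q, H = ⊥ ∨ H = ⊤) :
    (∀ z : Q, z ^ p = 1) ∧ (∀ y z : Q, y * z = z * y) := by
  have hzp : ∀ z : Q, z ≠ 1 → Subgroup.zpowers z = ⊤ := fun z hz =>
    (htriv _).resolve_left (fun hb => hz (Subgroup.zpowers_eq_bot.mp hb))
  constructor
  · intro z
    by_contra hz
    have h2 : z ∈ Subgroup.zpowers (z ^ p) := (hzp _ hz) ▸ Subgroup.mem_top z
    obtain ⟨k, hk⟩ := h2
    have hzone : z ^ ((p : ℤ) * k - 1) = 1 := by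
      have hk' : (z ^ p) ^ k = z := hk
      have : ((z ^ p) ^ k) * z⁻¹ = 1 := by rw [hk']; group
      rw [zpow_sub, zpow_mul, zpow_natCast, zpow_one]
      simpa using this
    have hdvd : (orderOf z : ℤ) ∣ (p : ℤ) * k - 1 := orderOf_dvd_iff_zpow_eq_one.mpr hzone
    obtain ⟨c, hc⟩ := hpQ z
    have hdvd2 : orderOf z ∣ p ^ c := orderOf_dvd_of_pow_eq_one hc
    obtain ⟨a, ha, hoz⟩ := (Nat.dvd_prime_pow hp).mp hdvd2
    rcases Nat.eq_zero_or_pos a with h0 | h1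
    · rw [h0, pow_zero] at hoz
      exact hz (by rw [orderOf_eq_one_iff.mp hoz, one_pow])
    · have hpp : (p : ℤ) ∣ (p : ℤ) * k - 1 := by
        refine dvd_trans ?_ hdvd
        rw [hoz]
        exact_mod_cast dvd_pow_self p h1.ne'
      have hone : (p : ℤ) ∣ 1 := by
        have := dvd_sub (dvd_mul_right (p : ℤ) k) hpp
        simpa using this
      have hle1 := Int.le_of_dvd one_pos hone
      have h2p := hp.two_le
      omega
  · intro y z
    by_cases hy : y = 1
    · simp [hy]
    · have hz : z ∈ Subgroup.zpowers y := (hzp _ hy) ▸ Subgroup.mem_top z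
      obtain ⟨k, rfl⟩ := hz
      exact ((Commute.refl y).zpow_right k).eq

lemma aux_mem_frattini {G : Type*} [Group G] {x : G}
    (h : ∀ M : Subgroup G, IsCoatom M → x ∈ M) : x ∈ frattini G := by
  have : frattini G = ⨅ M ∈ {H : Subgroup G | IsCoatom H}, M := rfl
  rw [this]
  simp only [Subgroup.mem_iInf]
  exact fun M hM => h M hM

lemma aux_frattini_facts {G : Type*} [Group G] [Finite G] {p : ℕ} (hp : p.Prime)
    (hpG : IsPGroup p G) :
    (∀ x : G, x ^ p ∈ frattini G) ∧ (∀ a b : G, a * b * a⁻¹ * b⁻¹ ∈ frattini G) := by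
  haveI : Fact p.Prime := ⟨hp⟩
  haveI := hpG.isNilpotent
  have hnorm : ∀ M : Subgroup G, IsCoatom M → M.Normal := fun M hM =>
    Subgroup.NormalizerCondition.normal_of_coatom M normalizerCondition_of_isNilpotent hM
  have key : ∀ M : Subgroup G, IsCoatom M → ∀ x : G, x ^ p ∈ M ∧ ∀ a b : G, a * b * a⁻¹ * b⁻¹ ∈ M := by
    intro M hM
    haveI := hnorm M hM
    obtain ⟨hpow, hcomm⟩ := aux_pow_comm_of_subgroups_trivial hp (hpG.to_quotient M)
      (aux_quot_subgroup_trivial hM)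
    intro x
    constructor
    · rw [← QuotientGroup.eq_one_iff]
      rw [QuotientGroup.mk_pow]
      exact hpow _
    · intro a b
      rw [← QuotientGroup.eq_one_iff]
      simp only [QuotientGroup.mk_mul, QuotientGroup.mk_inv]
      rw [hcomm ((a : G ⧸ M)) ((b : G ⧸ M))]
      group
  exact ⟨fun x => aux_mem_frattini (fun M hM => ((key M hM) x).1),
    fun a b => aux_mem_frattini (fun M hM => ((key M hM) a).2 a b)⟩

lemma aux_map_eq_top_iff {G : Type*} [Group G] (N : Subgroup G) [N.Normal] (K : Subgroup G) :
    Subgroup.map (QuotientGroup.mk' N) K = ⊤ ↔ K ⊔ N = ⊤ := by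
  constructor
  · intro h
    rw [eq_top_iff]
    intro g _
    have hg : QuotientGroup.mk' N g ∈ Subgroup.map (QuotientGroup.mk' N) K := by
      rw [h]; exact Subgroup.mem_top _
    obtain ⟨k, hk, hkg⟩ := hg
    obtain ⟨z, hz, hzz⟩ := (QuotientGroup.mk'_eq_mk' N).mp hkg
    rw [← hzz]
    exact Subgroup.mul_mem_sup hk hz
  · intro h
    have := congrArg (Subgroup.map (QuotientGroup.mk' N)) h
    rw [Subgroup.map_sup, Subgroup.map_top_of_surjective _ (QuotientGroup.mk'_surjective N)] at this
    have hN : Subgroup.map (QuotientGroup.mk' N) N = ⊥ := by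
      refine le_bot_iff.mp ?_
      rintro x ⟨m, hm, rfl⟩
      simpa [Subgroup.mem_bot] using (QuotientGroup.eq_one_iff m).mpr hm
    rw [hN, sup_bot_eq] at this
    exact this

lemma aux_LA {K V : Type*} [Field K] [AddCommGroup V] [Module K V] [FiniteDimensional K V]
    (U : Submodule K V) : ∀ (d m : ℕ) (v : Fin m → V),
    Module.finrank K V ≤ m → Submodule.span K (Set.range v) ⊔ U = ⊤ →
    Module.finrank K V - Module.finrank K (Submodule.span K (Set.range v)) ≤ d →
    ∃ u : Fin m → V, (∀ i, u i ∈ U) ∧ Submodule.span K (Set.range fun i => v i + u i) = ⊤ := by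
  intro d
  induction d with
  | zero =>
    intro m v hm hsup hd
    have h1 : Module.finrank K (Submodule.span K (Set.range v)) ≤ Module.finrank K V :=
      Submodule.finrank_le _
    have h2 : Module.finrank K (Submodule.span K (Set.range v)) = Module.finrank K V := by omega
    refine ⟨0, fun i => U.zero_mem, ?_⟩
    simpa using Submodule.eq_top_of_finrank_eq h2
  | succ d ih =>
    intro m v hm hsup hd
    by_cases htop : Submodule.span K (Set.range v) = ⊤
    · refine ⟨0, fun i => U.zero_mem, ?_⟩
      simpa using htop
    · set W := Submodule.span K (Set.range v) with hW
      -- find u ∈ U, u ∉ W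
      have hu : ∃ u ∈ U, u ∉ W := by
        by_contra hc
        push_neg at hc
        have : U ≤ W := hc
        rw [sup_eq_left.mpr this] at hsup
        exact htop hsup
      obtain ⟨u, huU, huW⟩ := hu
      -- find redundant index
      have hli : ¬ LinearIndependent K v := by
        intro hli
        have hcard : m ≤ Module.finrank K V := by
          simpa using hli.fintype_card_le_finrank
        have hmeq : m = Module.finrank K V := le_antisymm hcard hm
        rcases Nat.eq_zero_or_pos m with h0 | hpos
        · apply htop
          rw [eq_top_iff]
          intro x _
          have h0' : Module.finrank K V = 0 := by omega
          haveI : Subsingleton V := Module.finrank_zero_iff.mp h0'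
          rw [Subsingleton.elim x 0]; exact W.zero_mem
        · haveI : Nonempty (Fin m) := ⟨⟨0, hpos⟩⟩
          exact htop (hli.span_eq_top_of_card_eq_finrank (by simpa using hmeq))
      rw [linearIndependent_iff_notMem_span] at hli
      push_neg at hli
      obtain ⟨j, hj⟩ := hli
      set v' := Function.update v j (v j + u) with hv'
      have hvj' : ∀ i, i ≠ j → v' i = v i := fun i hi => Function.update_of_ne hi _ _
      have himg : v '' (Set.univ \ {j}) ⊆ Set.range v' := by
        rintro y ⟨i, ⟨_, hij⟩, rfl⟩
        exact ⟨i, hvj' i (by simpa using hij)⟩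
      have hWle : W ≤ Submodule.span K (Set.range v') := by
        rw [hW, Submodule.span_le]
        rintro y ⟨i, rfl⟩
        by_cases hij : i = j
        · subst hij
          exact Submodule.span_mono himg hj
        · exact Submodule.subset_span ⟨i, hvj' i hij⟩
      have hvjW : v j ∈ W := Submodule.subset_span ⟨j, rfl⟩
      have huW' : u ∈ Submodule.span K (Set.range v') := by
        have h1 : v j + u ∈ Submodule.span K (Set.range v') :=
          Submodule.subset_span ⟨j, Function.update_self j _ v⟩
        have h2 : v j ∈ Submodule.span K (Set.range v') := hWle hvjW
        simpa using sub_mem h1 h2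
      have hlt : W < Submodule.span K (Set.range v') :=
        lt_of_le_of_ne hWle (fun he => huW (he ▸ huW'))
      have hfr : Module.finrank K W < Module.finrank K (Submodule.span K (Set.range v')) :=
        Submodule.finrank_lt_finrank_of_lt hlt
      have hsup' : Submodule.span K (Set.range v') ⊔ U = ⊤ := by
        rw [eq_top_iff, ← hsup]
        exact sup_le_sup_right hWle U
      have hd' : Module.finrank K V - Module.finrank K (Submodule.span K (Set.range v')) ≤ d := by
        omega
      obtain ⟨u', hu'U, hspan⟩ := ih m v' hm hsup' hd'
      refine ⟨fun i => if i = j then u + u' i else u' i, ?_, ?_⟩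
      · intro i
        by_cases hij : i = j <;> simp [hij, U.add_mem huU (hu'U _), hu'U i]
      · rw [← hspan]
        congr 1
        ext y
        constructor <;> rintro ⟨i, rfl⟩ <;> refine ⟨i, ?_⟩ <;> by_cases hij : i = j
        · subst hij; simp [hv', add_assoc]
        · simp [hvj' i hij, hij]
        · subst hij; simp [hv', add_assoc]
        · simp [hvj' i hij, hij]

/-- `ZMod p`-module structure on `Additive Q` for `Q` commutative of exponent dividing `p`. -/
def auxMod {Q : Type*} [CommGroup Q] (p : ℕ) (h : ∀ q : Q, q ^ p = 1) :
    Module (ZMod p) (Additive Q) :=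
  AddCommGroup.zmodModule (by
    intro v
    have h2 := congrArg Additive.ofMul (h (Additive.toMul v))
    simpa using h2)

/-- Commutative group structure on quotient by subgroup containing commutators. -/
def auxCommGroup {G : Type*} [Group G] (Φ : Subgroup G) [Φ.Normal]
    (hcomm : ∀ a b : G, a * b * a⁻¹ * b⁻¹ ∈ Φ) : CommGroup (G ⧸ Φ) :=
  { (inferInstance : Group (G ⧸ Φ)) with
    mul_comm := by
      intro a b
      induction a using QuotientGroup.induction_on with
      | H a =>
      induction b using QuotientGroup.induction_on with
      | H b =>
      have h1 : ((a * b * a⁻¹ * b⁻¹ : G) : G ⧸ Φ) = 1 :=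
        (QuotientGroup.eq_one_iff _).mpr (hcomm a b)
      simp only [QuotientGroup.mk_mul, QuotientGroup.mk_inv] at h1
      have h2 : ((a : G ⧸ Φ) * b) * ((b : G ⧸ Φ) * a)⁻¹ = 1 := by
        rw [mul_inv_rev]
        simpa [mul_assoc] using h1
      exact mul_inv_eq_one.mp h2 }

lemma aux_gaschutz_abelian {Q : Type*} [CommGroup Q] [Finite Q] {p : ℕ} (hp : p.Prime)
    (hq : ∀ z : Q, z ^ p = 1) (NQ : Subgroup Q) (m : ℕ) (y : Fin m → Q)
    (S : Finset Q) (hS : Subgroup.closure (S : Set Q) = ⊤) (hSm : S.card ≤ m)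
    (hsup : Subgroup.closure (Set.range y) ⊔ NQ = ⊤) :
    ∃ u : Fin m → Q, (∀ i, u i ∈ NQ) ∧
      Subgroup.closure (Set.range fun i => y i * u i) = ⊤ := by
  classical
  haveI : Fact p.Prime := ⟨hp⟩
  letI : Module (ZMod p) (Additive Q) := auxMod p hq
  haveI : Module.Finite (ZMod p) (Additive Q) := Module.Finite.of_finite
  let iso : Subgroup Q ≃o Submodule (ZMod p) (Additive Q) :=
    (Subgroup.toAddSubgroup (G := Q)).trans (AddSubgroup.toZModSubmodule (M := Additive Q) p)
  have hmem : ∀ (H : Subgroup Q) (q : Q), Additive.ofMul q ∈ iso H ↔ q ∈ H :=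
    fun H q => Iff.rfl
  have spanEq : ∀ T : Set Q,
      iso (Subgroup.closure T) = Submodule.span (ZMod p) (Additive.ofMul '' T) := by
    intro T
    refine le_antisymm ?_ ?_
    · have h1 : Subgroup.closure T ≤
          iso.symm (Submodule.span (ZMod p) (Additive.ofMul '' T)) := by
        rw [Subgroup.closure_le]
        intro s hs
        have h2 : Additive.ofMul s ∈ Submodule.span (ZMod p) (Additive.ofMul '' T) :=
          Submodule.subset_span (Set.mem_image_of_mem _ hs)
        have h3 := hmem (iso.symm (Submodule.span (ZMod p) (Additive.ofMul '' T))) s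
        rw [OrderIso.apply_symm_apply] at h3
        exact h3.mp h2
      have h4 := iso.monotone h1
      rwa [OrderIso.apply_symm_apply] at h4
    · rw [Submodule.span_le]
      rintro _ ⟨s, hs, rfl⟩
      exact (hmem _ s).mpr (Subgroup.subset_closure hs)
  -- finrank bound
  have hfr : Module.finrank (ZMod p) (Additive Q) ≤ m := by
    have h1 : Submodule.span (ZMod p) (Additive.ofMul '' (S : Set Q)) = ⊤ := by
      rw [← spanEq, hS, OrderIso.map_top]
    have h2 : (⇑Additive.ofMul '' (S : Set Q)) =
        ((S.image (fun a => Additive.ofMul a) : Finset (Additive Q)) : Set (Additive Q)) :=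
      (Finset.coe_image).symm
    rw [h2] at h1
    have h3 := finrank_span_le_card (R := ZMod p)
      ((S.image (fun a => Additive.ofMul a) : Finset (Additive Q)) : Set (Additive Q))
    rw [h1] at h3
    rw [finrank_top] at h3
    calc Module.finrank (ZMod p) (Additive Q)
        ≤ _ := h3
      _ ≤ m := by
          simpa using le_trans (Finset.card_image_le) hSm
  -- main span condition
  have hsup' : Submodule.span (ZMod p)
      (Set.range fun i => Additive.ofMul (y i)) ⊔ iso NQ = ⊤ := by
    have h6 := congrArg iso hsup
    rw [OrderIso.map_top, iso.map_sup, spanEq] at h6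
    have h7 : (⇑Additive.ofMul '' Set.range y) = Set.range fun i => Additive.ofMul (y i) :=
      (Set.range_comp _ _).symm
    rw [h7] at h6
    exact h6
  obtain ⟨u', hu'mem, hu'span⟩ := aux_LA (iso NQ) (Module.finrank (ZMod p) (Additive Q)) m
    (fun i => Additive.ofMul (y i)) hfr hsup' (Nat.sub_le _ _)
  refine ⟨fun i => Additive.toMul (u' i), ?_, ?_⟩
  · intro i
    have := (hmem NQ (Additive.toMul (u' i)))
    simpa using this.mp (by simpa using hu'mem i)
  · have h8 : (⇑Additive.ofMul '' Set.range fun i => y i * Additive.toMul (u' i)) =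
        Set.range fun i => Additive.ofMul (y i) + u' i := by
      have hfun : (⇑Additive.ofMul ∘ fun i => y i * Additive.toMul (u' i)) =
          fun i => Additive.ofMul (y i) + u' i := by
        funext i
        simp [Function.comp]
      rw [← Set.range_comp, hfun]
    have h5 : iso (Subgroup.closure (Set.range fun i => y i * Additive.toMul (u' i))) = ⊤ := by
      rw [spanEq, h8, hu'span]
    exact iso.injective (by rw [h5, OrderIso.map_top])
    
lemma aux_gaschutz {G : Type*} [Group G] [Finite G] {p : ℕ} (hp : p.Prime)
    (hpG : IsPGroup p G) (N : Subgroup G) [N.Normal] (m : ℕ) (x : Fin m → G)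
    (hm : Group.rank G ≤ m)
    (hx : Subgroup.closure (Set.range x) ⊔ N = ⊤) :
    ∃ ω : Fin m → G, (∀ i, ω i ∈ N) ∧
      Subgroup.closure (Set.range fun i => x i * ω i) = ⊤ := by
  classical
  haveI : Fact p.Prime := ⟨hp⟩
  obtain ⟨hpow, hcommF⟩ := aux_frattini_facts hp hpG
  set Φ := frattini G with hΦ
  letI : CommGroup (G ⧸ Φ) := auxCommGroup Φ hcommF
  set π := QuotientGroup.mk' Φ with hπ
  have hsur := QuotientGroup.mk'_surjective Φ
  have hqpow : ∀ q : G ⧸ Φ, q ^ p = 1 := by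
    intro q
    induction q using QuotientGroup.induction_on with
    | H g =>
    rw [← QuotientGroup.mk_pow]
    exact (QuotientGroup.eq_one_iff _).mpr (hpow g)
  obtain ⟨S, hScard, hSclo⟩ := Group.rank_spec G
  have hSq : Subgroup.closure ((S.image (fun g => π g) : Finset (G ⧸ Φ)) : Set (G ⧸ Φ)) = ⊤ := by
    rw [Finset.coe_image]
    have himg : (fun g => π g) '' (S : Set G) = ⇑π '' (S : Set G) := rfl
    rw [himg, ← MonoidHom.map_closure, hSclo]
    exact Subgroup.map_top_of_surjective _ hsur
  have hsupq : Subgroup.closure (Set.range fun i => π (x i)) ⊔ Subgroup.map π N = ⊤ := by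
    have := congrArg (Subgroup.map π) hx
    rw [Subgroup.map_sup, Subgroup.map_top_of_surjective _ hsur, MonoidHom.map_closure,
      ← Set.range_comp] at this
    exact this
  obtain ⟨u, humem, huspan⟩ := aux_gaschutz_abelian hp hqpow (Subgroup.map π N) m
    (fun i => π (x i)) (S.image (fun g => π g)) hSq
    (le_trans Finset.card_image_le (hScard ▸ hm)) hsupq
  have hlift : ∀ i, ∃ n, n ∈ N ∧ π n = u i := by
    intro i
    obtain ⟨n, hn, he⟩ := humem i
    exact ⟨n, hn, he⟩
  choose ω hω1 hω2 using hlift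
  refine ⟨ω, hω1, ?_⟩
  have hmap : Subgroup.map π (Subgroup.closure (Set.range fun i => x i * ω i)) = ⊤ := by
    rw [MonoidHom.map_closure, ← Set.range_comp]
    have : (π ∘ fun i => x i * ω i) = fun i => π (x i) * u i := by
      funext i
      simp [Function.comp, map_mul, hω2 i]
    rw [this]; exact huspan
  have hsupΦ := (aux_map_eq_top_iff Φ _).mp hmap
  haveI : IsCoatomic (Subgroup G) := Finite.to_isCoatomic
  exact frattini_nongenerating hsupΦ

lemma aux_omega_char {G : Type*} [Group G] (n : ℕ)
    (hsemi : ∀ x y : G, x ^ n = y ^ n ↔ (x * y⁻¹) ^ n = 1) (g : G) :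
    g ∈ Subgroup.closure {g : G | g ^ n = 1} ↔ g ^ n = 1 := by
  let K : Subgroup G :=
    { carrier := {g : G | g ^ n = 1}
      one_mem' := one_pow n
      mul_mem' := by
        intro a b ha hb
        simp only [Set.mem_setOf_eq] at *
        have h1 : a ^ n = (b⁻¹) ^ n := by rw [ha, inv_pow, hb, inv_one]
        have h2 := (hsemi a b⁻¹).mp h1
        simpa using h2
      inv_mem' := by
        intro a ha
        simp only [Set.mem_setOf_eq] at *
        rw [inv_pow, ha, inv_one] }
  have hK : Subgroup.closure {g : G | g ^ n = 1} = K := by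
    have : {g : G | g ^ n = 1} = (K : Set G) := rfl
    rw [this, Subgroup.closure_eq]
  rw [hK]
  exact Iff.rfl

lemma aux_reduce {G : Type*} [Group G] {p e : ℕ} (hp : p.Prime) (he : 1 ≤ e)
    (hexp : ∀ g : G, g ^ p ^ e = 1)
    {t c x : G} (htn : t ^ p ^ (e - 1) ≠ 1)
    {k : ℤ} (hxt : x = c * t ^ k * c⁻¹)
    {cc : ℕ} (hc : orderOf x = p ^ cc) (hcc : 1 ≤ cc) :
    ∃ j : ℤ, ¬ (p : ℤ) ∣ j ∧ x ^ p ^ (cc - 1) = (c * t ^ j * c⁻¹) ^ p ^ (e - 1) := by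
  have hp0 : (p : ℤ) ≠ 0 := by exact_mod_cast hp.pos.ne'
  have hpe1 : ∀ g : G, g ^ ((p : ℤ) ^ e) = 1 := by
    intro g
    rw [← Nat.cast_pow, zpow_natCast]
    exact hexp g
  -- orderOf t = p ^ e
  have hot : orderOf t = p ^ e := by
    obtain ⟨a, ha, hoa⟩ := (Nat.dvd_prime_pow hp).mp (orderOf_dvd_of_pow_eq_one (hexp t))
    have hae : a = e := by
      by_contra hne
      have hale : a ≤ e - 1 := by omega
      exact htn (orderOf_dvd_iff_pow_eq_one.mp (hoa ▸ pow_dvd_pow p hale))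
    rw [hoa, hae]
  -- y := x ^ p ^ (cc - 1)
  have hy : x ^ p ^ (cc - 1) = c * t ^ (k * ((p ^ (cc - 1) : ℕ) : ℤ)) * c⁻¹ := by
    rw [hxt, conj_pow, ← zpow_natCast (t ^ k), ← zpow_mul]
  have hyne : x ^ p ^ (cc - 1) ≠ 1 := by
    intro h
    have h1 := orderOf_dvd_of_pow_eq_one h
    rw [hc] at h1
    have h2 := Nat.le_of_dvd (Nat.pow_pos hp.pos) h1
    have h3 := Nat.pow_lt_pow_right hp.one_lt (show cc - 1 < cc by omega)
    omega
  have hyp : (x ^ p ^ (cc - 1)) ^ p = 1 := by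
    rw [← pow_mul, ← pow_succ]
    have h4 : cc - 1 + 1 = cc := by omega
    rw [h4, ← hc, pow_orderOf_eq_one]
  -- t ^ (k * p^(cc-1) * p) = 1
  have htK : t ^ (k * ((p ^ (cc - 1) : ℕ) : ℤ) * (p : ℤ)) = 1 := by
    have h1 : (c * t ^ (k * ((p ^ (cc - 1) : ℕ) : ℤ)) * c⁻¹) ^ p = 1 := by rw [← hy]; exact hyp
    rw [conj_pow] at h1
    have h2 : (t ^ (k * ((p ^ (cc - 1) : ℕ) : ℤ))) ^ p = 1 := by
      have h5 := congrArg (fun z => c⁻¹ * z * c) h1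
      simpa [mul_assoc] using h5
    rw [← zpow_natCast (t ^ (k * ((p ^ (cc - 1) : ℕ) : ℤ))), ← zpow_mul] at h2
    exact h2
  have hdvd : ((p : ℤ) ^ e) ∣ k * ((p ^ (cc - 1) : ℕ) : ℤ) * (p : ℤ) := by
    have h6 := orderOf_dvd_iff_zpow_eq_one.mpr htK
    rw [hot] at h6
    exact_mod_cast h6
  obtain ⟨w, hw⟩ := hdvd
  have hpe : (p : ℤ) ^ e = (p : ℤ) ^ (e - 1) * p := by
    rw [← pow_succ]
    congr 1
    omega
  have hK : k * ((p ^ (cc - 1) : ℕ) : ℤ) = (p : ℤ) ^ (e - 1) * w := by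
    rw [hpe] at hw
    have h7 : k * ((p ^ (cc - 1) : ℕ) : ℤ) * (p : ℤ) = (p : ℤ) ^ (e - 1) * w * (p : ℤ) := by
      rw [hw]; ring
    exact mul_right_cancel₀ hp0 h7
  refine ⟨w, ?_, ?_⟩
  · rintro ⟨w', rfl⟩
    apply hyne
    rw [hy, hK]
    have h8 : (p : ℤ) ^ (e - 1) * ((p : ℤ) * w') = (p : ℤ) ^ e * w' := by
      rw [hpe]; ring
    rw [h8, zpow_mul, hpe1, one_zpow]
    simp
  · rw [hy, hK, mul_comm ((p : ℤ) ^ (e - 1)) w, zpow_mul, ← Nat.cast_pow, zpow_natCast,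
      conj_pow]

lemma aux_lift_spherical {G : Type*} [Group G] [Finite G] {p : ℕ} (hp : p.Prime)
    (hpG : IsPGroup p G) (Ω : Subgroup G) [Ω.Normal] (U : List (G ⧸ Ω))
    (hlen : Group.rank G + 1 ≤ U.length) (hU : IsSpherical U) :
    ∃ T : List G, T.map (QuotientGroup.mk : G → G ⧸ Ω) = U ∧ IsSpherical T := by
  obtain ⟨hUne, hUclo, hUprod⟩ := hU
  have hne : U ≠ [] := by
    intro h
    rw [h] at hlen
    simp at hlen
  set W := U.dropLast with hWdef
  set w := U.getLast hne with hwdef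
  have hWU : W ++ [w] = U := List.dropLast_append_getLast hne
  have hprodW : W.prod * w = 1 := by
    have h := congrArg List.prod hWU
    rw [List.prod_append] at h
    simpa [hUprod] using h
  have hwinv : w = W.prod⁻¹ := (mul_eq_one_iff_inv_eq.mp hprodW).symm
  -- closure of W is everything
  have hclW : Subgroup.closure {g : G ⧸ Ω | g ∈ W} = ⊤ := by
    rw [eq_top_iff, ← hUclo]
    apply Subgroup.closure_le _ |>.mpr
    intro g hg
    have : g ∈ W ++ [w] := by rw [hWU]; exact hg
    rcases List.mem_append.mp this with h | h
    · exact Subgroup.subset_closure h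
    · have hgw : g = w := by simpa using h
      rw [hgw, hwinv]
      exact SetLike.mem_coe.mpr (Subgroup.inv_mem _
        (Subgroup.list_prod_mem _ (fun a ha => Subgroup.subset_closure ha)))
  set m := W.length with hm
  have hmr : Group.rank G ≤ m := by
    have h9 : m = U.length - 1 := by
      rw [hm, hWdef, List.length_dropLast]
    omega
  -- lift W pointwise
  have hlift : ∀ i : Fin m, ∃ g : G, (g : G ⧸ Ω) = W.get i := fun i =>
    QuotientGroup.mk_surjective (W.get i)
  choose g0 hg0 using hlift
  have hrange : Set.range (fun i => ((g0 i : G) : G ⧸ Ω)) = {q : G ⧸ Ω | q ∈ W} := by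
    ext q
    constructor
    · rintro ⟨i, rfl⟩
      show ((g0 i : G) : G ⧸ Ω) ∈ {q : G ⧸ Ω | q ∈ W}
      rw [Set.mem_setOf_eq, hg0 i]
      exact W.get_mem i
    · intro hq
      obtain ⟨i, hi⟩ := List.mem_iff_get.mp hq
      refine ⟨i, ?_⟩
      show ((g0 i : G) : G ⧸ Ω) = q
      rw [hg0 i]
      exact hi
  have hsup : Subgroup.closure (Set.range g0) ⊔ Ω = ⊤ := by
    rw [← aux_map_eq_top_iff]
    rw [MonoidHom.map_closure, ← Set.range_comp]
    have hcomp : (⇑(QuotientGroup.mk' Ω) ∘ g0) = fun i => ((g0 i : G) : G ⧸ Ω) := rfl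
    rw [hcomp, hrange, hclW]
  obtain ⟨ω, hωΩ, hωclo⟩ := aux_gaschutz hp hpG Ω m g0 hmr hsup
  set t : Fin m → G := fun i => g0 i * ω i with ht
  have htmk : ∀ i, ((t i : G) : G ⧸ Ω) = W.get i := by
    intro i
    rw [ht]
    have : ((g0 i * ω i : G) : G ⧸ Ω) = (g0 i : G ⧸ Ω) * (ω i : G ⧸ Ω) := rfl
    rw [this, (QuotientGroup.eq_one_iff (ω i)).mpr (hωΩ i), mul_one, hg0 i]
  set T := List.ofFn t ++ [(List.ofFn t).prod⁻¹] with hT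
  have hmapU : T.map (QuotientGroup.mk : G → G ⧸ Ω) = U := by
    rw [hT, List.map_append, List.map_ofFn]
    have h1 : List.ofFn ((QuotientGroup.mk : G → G ⧸ Ω) ∘ t) = W := by
      have : (QuotientGroup.mk : G → G ⧸ Ω) ∘ t = W.get := by
        funext i
        exact htmk i
      rw [this, List.ofFn_get]
    have h2 : ((((List.ofFn t).prod)⁻¹ : G) : G ⧸ Ω) = w := by
      have h3 : (((List.ofFn t).prod : G) : G ⧸ Ω) = (List.ofFn ((QuotientGroup.mk : G → G ⧸ Ω) ∘ t)).prod := by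
        rw [← List.map_ofFn]
        exact (map_list_prod (QuotientGroup.mk' Ω) (List.ofFn t))
      have : ((((List.ofFn t).prod)⁻¹ : G) : G ⧸ Ω) = (((List.ofFn t).prod : G) : G ⧸ Ω)⁻¹ := rfl
      rw [this, h3, h1, hwinv]
    rw [h1]
    simp only [List.map_cons, List.map_nil, h2]
    exact hWU
  refine ⟨T, hmapU, ?_, ?_, ?_⟩
  · intro g hg hg1
    have hmem : (g : G ⧸ Ω) ∈ U := by
      rw [← hmapU]
      exact List.mem_map_of_mem hg
    exact hUne _ hmem (by rw [hg1]; rfl)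
  · -- closure
    rw [eq_top_iff, ← hωclo]
    apply Subgroup.closure_le _ |>.mpr
    rintro a ⟨i, rfl⟩
    apply Subgroup.subset_closure
    simp only [Set.mem_setOf_eq, hT, List.mem_append]
    left
    exact List.mem_ofFn.mpr ⟨i, rfl⟩
  · rw [hT]
    simp

end AuxLemmas

theorem stmt_16 {G : Type*} [Group G] [Finite G] (p e : ℕ) (hp : p.Prime)
    (he : 1 ≤ e) (hpG : IsPGroup p G) (hexp : Monoid.exponent G = p ^ e)
    (hsemi : ∀ x y : G,
      x ^ p ^ (e - 1) = y ^ p ^ (e - 1) ↔ (x * y⁻¹) ^ p ^ (e - 1) = 1)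
    (Ω : Subgroup G) [Ω.Normal]
    (hΩ : Ω = Subgroup.closure {g : G | g ^ p ^ (e - 1) = 1})
    (r₁ r₂ : ℕ) (h₁ : r₁ ≥ Group.rank G + 1) (h₂ : r₂ ≥ Group.rank G + 1)
    (U₁ U₂ : List (G ⧸ Ω)) (hl₁ : U₁.length = r₁) (hl₂ : U₂.length = r₂)
    (hU : IsRamificationStructure U₁ U₂) :
    ∃ T₁ T₂ : List G,
      T₁.map (QuotientGroup.mk : G → G ⧸ Ω) = U₁ ∧
      T₂.map (QuotientGroup.mk : G → G ⧸ Ω) = U₂ ∧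
      IsRamificationStructure T₁ T₂ := by
  classical
  haveI : Fact p.Prime := ⟨hp⟩
  have hexp' : ∀ g : G, g ^ p ^ e = 1 := fun g => by
    rw [← hexp]; exact Monoid.pow_exponent_eq_one g
  have hΩmem : ∀ g : G, g ∈ Ω ↔ g ^ p ^ (e - 1) = 1 := by
    intro g
    rw [hΩ]
    exact aux_omega_char _ hsemi g
  have hqp : ∀ q : G ⧸ Ω, q ^ p = 1 := by
    intro q
    induction q using QuotientGroup.induction_on with
    | H g =>
    rw [← QuotientGroup.mk_pow, QuotientGroup.eq_one_iff, hΩmem, ← pow_mul]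
    have hppe : p * p ^ (e - 1) = p ^ e := by
      rw [← pow_succ']
      congr 1
      omega
    rw [hppe]
    exact hexp' g
  obtain ⟨hU₁, hU₂, hUdisj⟩ := hU
  obtain ⟨T₁, hT₁map, hT₁⟩ := aux_lift_spherical hp hpG Ω U₁ (by rw [hl₁]; exact h₁) hU₁
  obtain ⟨T₂, hT₂map, hT₂⟩ := aux_lift_spherical hp hpG Ω U₂ (by rw [hl₂]; exact h₂) hU₂
  refine ⟨T₁, T₂, hT₁map, hT₂map, hT₁, hT₂, ?_⟩
  have hmk_sigma : ∀ (T : List G) (U : List (G ⧸ Ω)),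
      T.map (QuotientGroup.mk : G → G ⧸ Ω) = U →
      ∀ {t c : G} {k : ℤ}, t ∈ T →
        ((c * t ^ k * c⁻¹ : G) : G ⧸ Ω) ∈ SigmaSet U := by
    intro T U hmap t c k ht
    refine ⟨(t : G ⧸ Ω), by rw [← hmap]; exact List.mem_map_of_mem ht, (c : G ⧸ Ω), k, ?_⟩
    simp only [QuotientGroup.mk_mul, QuotientGroup.mk_inv, QuotientGroup.mk_zpow]
  ext x
  simp only [Set.mem_inter_iff, Set.mem_singleton_iff]
  constructor
  · rintro ⟨⟨t, htT, c, k, hxt⟩, ⟨s, hsT, d, l, hxs⟩⟩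
    have hximg : ((x : G) : G ⧸ Ω) = 1 := by
      have h1 : ((x : G) : G ⧸ Ω) ∈ SigmaSet U₁ ∩ SigmaSet U₂ :=
        ⟨by rw [hxt]; exact hmk_sigma T₁ U₁ hT₁map htT,
         by rw [hxs]; exact hmk_sigma T₂ U₂ hT₂map hsT⟩
      rw [hUdisj] at h1
      exact h1
    have hxΩ : x ^ p ^ (e - 1) = 1 := (hΩmem x).mp ((QuotientGroup.eq_one_iff x).mp hximg)
    by_contra hx1
    obtain ⟨cc, hccle, hocc⟩ := (Nat.dvd_prime_pow hp).mp (orderOf_dvd_of_pow_eq_one hxΩ)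
    have hcc1 : 1 ≤ cc := by
      rcases Nat.eq_zero_or_pos cc with h0 | h
      · exact absurd (orderOf_eq_one_iff.mp (by rw [hocc, h0, pow_zero])) hx1
      · exact h
    have htU : ((t : G) : G ⧸ Ω) ∈ U₁ := by
      rw [← hT₁map]; exact List.mem_map_of_mem htT
    have hsU : ((s : G) : G ⧸ Ω) ∈ U₂ := by
      rw [← hT₂map]; exact List.mem_map_of_mem hsT
    have ht1 : ((t : G) : G ⧸ Ω) ≠ 1 := hU₁.1 _ htU
    have hs1 : ((s : G) : G ⧸ Ω) ≠ 1 := hU₂.1 _ hsU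
    have htn : t ^ p ^ (e - 1) ≠ 1 := fun h =>
      ht1 ((QuotientGroup.eq_one_iff t).mpr ((hΩmem t).mpr h))
    have hsn : s ^ p ^ (e - 1) ≠ 1 := fun h =>
      hs1 ((QuotientGroup.eq_one_iff s).mpr ((hΩmem s).mpr h))
    obtain ⟨j, hjp, hjy⟩ := aux_reduce hp he hexp' htn hxt hocc hcc1
    obtain ⟨i, hip, hiy⟩ := aux_reduce hp he hexp' hsn hxs hocc hcc1
    have hAB : (c * t ^ j * c⁻¹) ^ p ^ (e - 1) = (d * s ^ i * d⁻¹) ^ p ^ (e - 1) := by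
      rw [← hjy, ← hiy]
    have hABΩ : (c * t ^ j * c⁻¹) * (d * s ^ i * d⁻¹)⁻¹ ∈ Ω :=
      (hΩmem _).mpr ((hsemi _ _).mp hAB)
    have hmkeq : ((c * t ^ j * c⁻¹ : G) : G ⧸ Ω) = ((d * s ^ i * d⁻¹ : G) : G ⧸ Ω) := by
      have h2 : ((c * t ^ j * c⁻¹ : G) : G ⧸ Ω) * ((d * s ^ i * d⁻¹ : G) : G ⧸ Ω)⁻¹ = 1 := by
        rw [← QuotientGroup.mk_inv, ← QuotientGroup.mk_mul, QuotientGroup.eq_one_iff]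
        exact hABΩ
      exact mul_inv_eq_one.mp h2
    have hA1 : ((c * t ^ j * c⁻¹ : G) : G ⧸ Ω) = 1 := by
      have h3 : ((c * t ^ j * c⁻¹ : G) : G ⧸ Ω) ∈ SigmaSet U₁ ∩ SigmaSet U₂ :=
        ⟨hmk_sigma T₁ U₁ hT₁map htT,
         by rw [hmkeq]; exact hmk_sigma T₂ U₂ hT₂map hsT⟩
      rw [hUdisj] at h3
      exact h3
    have htj : ((t : G) : G ⧸ Ω) ^ j = 1 := by
      have h4 : ((c : G) : G ⧸ Ω) * ((t : G) : G ⧸ Ω) ^ j * ((c : G) : G ⧸ Ω)⁻¹ = 1 := by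
        rw [← QuotientGroup.mk_zpow, ← QuotientGroup.mk_inv, ← QuotientGroup.mk_mul,
          ← QuotientGroup.mk_mul]
        exact hA1
      have h5 := congrArg (fun z => ((c : G) : G ⧸ Ω)⁻¹ * z * ((c : G) : G ⧸ Ω)) h4
      simpa [mul_assoc] using h5
    have hordt : orderOf ((t : G) : G ⧸ Ω) = p := orderOf_eq_prime (hqp _) ht1
    have hpj : (p : ℤ) ∣ j := by
      have h6 := orderOf_dvd_iff_zpow_eq_one.mpr htj
      rwa [hordt] at h6
    exact hjp hpj
  · intro hx
    subst hx
    have hT₁ne : T₁ ≠ [] := by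
      intro h
      have h7 := congrArg List.length hT₁map
      rw [h, hl₁] at h7
      simp at h7
      omega
    have hT₂ne : T₂ ≠ [] := by
      intro h
      have h7 := congrArg List.length hT₂map
      rw [h, hl₂] at h7
      simp at h7
      omega
    obtain ⟨t₀, ht₀⟩ := List.exists_mem_of_ne_nil T₁ hT₁ne
    obtain ⟨s₀, hs₀⟩ := List.exists_mem_of_ne_nil T₂ hT₂ne
    exact ⟨⟨t₀, ht₀, 1, 0, by simp⟩, ⟨s₀, hs₀, 1, 0, by simp⟩⟩
end

section
/- Let G and G* be finite groups of coprime order. If G admits a ramification structure of size (r₁, r₂) and G* admits one of size (r₁*, r₂*), then G × G* admits a ramification structure of size (max{r₁, r₁*}, max{r₂, r₂*}). -/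
open Subgroup

private lemma top_of_maps {G G' : Type*} [Group G] [Group G'] [Finite G] [Finite G']
    (hcop : Nat.Coprime (Nat.card G) (Nat.card G')) (H : Subgroup (G × G'))
    (h1 : H.map (MonoidHom.fst G G') = ⊤) (h2 : H.map (MonoidHom.snd G G') = ⊤) :
    H = ⊤ := by
  have key1 : ∀ a : G, ((a, 1) : G × G') ∈ H := by
    intro a
    obtain ⟨b, hb⟩ := (powCoprime hcop).surjective a
    have hbm : b ∈ H.map (MonoidHom.fst G G') := h1 ▸ mem_top b
    obtain ⟨p, hp, hpb⟩ := hbm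
    have hpow := H.pow_mem hp (Nat.card G')
    have : p ^ Nat.card G' = (a, 1) := by
      have h0 : (p ^ Nat.card G') = (p.1 ^ Nat.card G', p.2 ^ Nat.card G') := rfl
      have hpb' : p.1 = b := hpb
      have hb' : b ^ Nat.card G' = a := hb
      rw [h0, pow_card_eq_one', hpb', hb']
    rwa [this] at hpow
  have key2 : ∀ b : G', ((1, b) : G × G') ∈ H := by
    intro b
    obtain ⟨c, hc⟩ := (powCoprime hcop.symm).surjective b
    have hcm : c ∈ H.map (MonoidHom.snd G G') := h2 ▸ mem_top c
    obtain ⟨p, hp, hpc⟩ := hcm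
    have hpow := H.pow_mem hp (Nat.card G)
    have : p ^ Nat.card G = (1, b) := by
      have h0 : (p ^ Nat.card G) = (p.1 ^ Nat.card G, p.2 ^ Nat.card G) := rfl
      have hpc' : p.2 = c := hpc
      have hc' : c ^ Nat.card G = b := hc
      rw [h0, pow_card_eq_one', hpc', hc']
    rwa [this] at hpow
  rw [eq_top_iff]
  rintro ⟨a, b⟩ -
  have := H.mul_mem (key1 a) (key2 b)
  simpa using this

private lemma pairSpherical {G G' : Type*} [Group G] [Group G'] [Finite G] [Finite G']
    (hcop : Nat.Coprime (Nat.card G) (Nat.card G'))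
    {T : List G} {T' : List G'} (hT : IsSpherical T) (hT' : IsSpherical T') :
    ∃ A : List (G × G'), A.length = max T.length T'.length ∧ IsSpherical A ∧
      ∀ x ∈ SigmaSet A, (x.1 ∈ SigmaSet T ∨ x.1 = 1) ∧ (x.2 ∈ SigmaSet T' ∨ x.2 = 1) := by
  set m := max T.length T'.length with hm
  set P : List G := T ++ List.replicate (m - T.length) 1 with hP
  set P' : List G' := T' ++ List.replicate (m - T'.length) 1 with hP'
  have hPlen : P.length = m := by
    simp [hP, Nat.add_sub_cancel' (le_max_left T.length T'.length)]
    exact Nat.add_sub_cancel' (le_max_left _ _)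
  have hP'len : P'.length = m := by
    simp [hP', Nat.add_sub_cancel' (le_max_right T.length T'.length)]
    exact Nat.add_sub_cancel' (le_max_right _ _)
  have hmapfst : List.map Prod.fst (P.zip P') = P :=
    List.map_fst_zip (by rw [hPlen, hP'len])
  have hmapsnd : List.map Prod.snd (P.zip P') = P' :=
    List.map_snd_zip (by rw [hPlen, hP'len])
  refine ⟨P.zip P', ?_, ⟨?_, ?_, ?_⟩, ?_⟩
  · simp [hPlen, hP'len]
  · -- nontrivial entries
    intro p hp
    obtain ⟨i, hi, rfl⟩ := List.mem_iff_getElem.1 hp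
    have hilen : i < m := by simpa [hPlen, hP'len] using hi
    rw [List.getElem_zip]
    by_cases hiT : i < T.length
    · have : P[i]'(by omega) = T[i] := List.getElem_append_left hiT
      intro hcontra
      have h1 : P[i]'(by omega) = 1 := congrArg Prod.fst hcontra
      exact hT.1 T[i] (List.getElem_mem hiT) (this ▸ h1)
    · have hiT' : i < T'.length := by omega
      have : P'[i]'(by omega) = T'[i] := List.getElem_append_left hiT'
      intro hcontra
      have h1 : P'[i]'(by omega) = 1 := congrArg Prod.snd hcontra
      exact hT'.1 T'[i] (List.getElem_mem hiT') (this ▸ h1)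
  · -- closure
    apply top_of_maps hcop
    · rw [MonoidHom.map_closure]
      have himg : (MonoidHom.fst G G') '' {p | p ∈ P.zip P'} = {g : G | g ∈ P} := by
        ext g
        simp only [Set.mem_image, Set.mem_setOf_eq]
        constructor
        · rintro ⟨p, hp, rfl⟩
          exact (List.of_mem_zip hp).1
        · intro hg
          rw [← hmapfst] at hg
          obtain ⟨p, hp, rfl⟩ := List.mem_map.1 hg
          exact ⟨p, hp, rfl⟩
      rw [himg, eq_top_iff, ← hT.2.1]
      exact closure_mono (fun g hg => List.mem_append_left _ hg)
    · rw [MonoidHom.map_closure]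
      have himg : (MonoidHom.snd G G') '' {p | p ∈ P.zip P'} = {g : G' | g ∈ P'} := by
        ext g
        simp only [Set.mem_image, Set.mem_setOf_eq]
        constructor
        · rintro ⟨p, hp, rfl⟩
          exact (List.of_mem_zip hp).2
        · intro hg
          rw [← hmapsnd] at hg
          obtain ⟨p, hp, rfl⟩ := List.mem_map.1 hg
          exact ⟨p, hp, rfl⟩
      rw [himg, eq_top_iff, ← hT'.2.1]
      exact closure_mono (fun g hg => List.mem_append_left _ hg)
  · -- product
    have h1 : (P.zip P').prod.1 = 1 := by
      have := List.prod_hom (P.zip P') (MonoidHom.fst G G')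
      rw [MonoidHom.coe_fst, hmapfst] at this
      have hPprod : P.prod = 1 := by
        simp [hP, hT.2.2]
      rw [← this]
      exact hPprod
    have h2 : (P.zip P').prod.2 = 1 := by
      have := List.prod_hom (P.zip P') (MonoidHom.snd G G')
      rw [MonoidHom.coe_snd, hmapsnd] at this
      have hPprod : P'.prod = 1 := by
        simp [hP', hT'.2.2]
      rw [← this]
      exact hPprod
    exact Prod.ext h1 h2
  · -- Sigma
    rintro x ⟨p, hp, c, k, rfl⟩
    constructor
    · rcases List.mem_append.1 (List.of_mem_zip hp).1 with ht | ht
      · exact Or.inl ⟨p.1, ht, c.1, k, rfl⟩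
      · have h1 : p.1 = 1 := List.eq_of_mem_replicate ht
        right
        show c.1 * p.1 ^ k * c.1⁻¹ = 1
        simp [h1]
    · rcases List.mem_append.1 (List.of_mem_zip hp).2 with ht | ht
      · exact Or.inl ⟨p.2, ht, c.2, k, rfl⟩
      · have h1 : p.2 = 1 := List.eq_of_mem_replicate ht
        right
        show c.2 * p.2 ^ k * c.2⁻¹ = 1
        simp [h1]

theorem stmt_18 {G G' : Type*} [Group G] [Group G'] [Finite G] [Finite G']
    (hcop : Nat.Coprime (Nat.card G) (Nat.card G'))
    (r₁ r₂ r₁' r₂' : ℕ)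
    (h : ∃ T₁ T₂ : List G, T₁.length = r₁ ∧ T₂.length = r₂ ∧
      IsRamificationStructure T₁ T₂)
    (h' : ∃ T₁ T₂ : List G', T₁.length = r₁' ∧ T₂.length = r₂' ∧
      IsRamificationStructure T₁ T₂) :
    ∃ A₁ A₂ : List (G × G'), A₁.length = max r₁ r₁' ∧ A₂.length = max r₂ r₂' ∧
      IsRamificationStructure A₁ A₂ := by
  obtain ⟨T₁, T₂, hl1, hl2, hS1, hS2, hdisj⟩ := h
  obtain ⟨T₁', T₂', hl1', hl2', hS1', hS2', hdisj'⟩ := h'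
  obtain ⟨A₁, hA₁len, hA₁sph, hA₁sig⟩ := pairSpherical hcop hS1 hS1'
  obtain ⟨A₂, hA₂len, hA₂sph, hA₂sig⟩ := pairSpherical hcop hS2 hS2'
  have h1T : (1 : G) ∈ SigmaSet T₁ ∩ SigmaSet T₂ := hdisj ▸ rfl
  obtain ⟨t₁, ht₁, -⟩ := h1T.1
  have hT₁ne : T₁.length ≠ 0 := by
    intro hc
    rw [List.length_eq_zero_iff] at hc
    simp [hc] at ht₁
  refine ⟨A₁, A₂, by rw [hA₁len, hl1, hl1'], by rw [hA₂len, hl2, hl2'], hA₁sph, hA₂sph, ?_⟩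
  ext x
  simp only [Set.mem_inter_iff, Set.mem_singleton_iff]
  constructor
  · rintro ⟨hx1, hx2⟩
    obtain ⟨ha1, hb1⟩ := hA₁sig x hx1
    obtain ⟨ha2, hb2⟩ := hA₂sig x hx2
    have hx1eq : x.1 = 1 := by
      rcases ha1 with ha1 | ha1
      · rcases ha2 with ha2 | ha2
        · have : x.1 ∈ SigmaSet T₁ ∩ SigmaSet T₂ := ⟨ha1, ha2⟩
          rwa [hdisj] at this
        · exact ha2
      · exact ha1
    have hx2eq : x.2 = 1 := by
      rcases hb1 with hb1 | hb1
      · rcases hb2 with hb2 | hb2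
        · have : x.2 ∈ SigmaSet T₁' ∩ SigmaSet T₂' := ⟨hb1, hb2⟩
          rwa [hdisj'] at this
        · exact hb2
      · exact hb1
    exact Prod.ext hx1eq hx2eq
  · rintro rfl
    have hA₁ne : A₁ ≠ [] := by
      intro hc
      rw [hc] at hA₁len
      simp at hA₁len
      omega
    have hA₂ne : A₂ ≠ [] := by
      have h1T2 : (1 : G) ∈ SigmaSet T₁ ∩ SigmaSet T₂ := hdisj ▸ rfl
      obtain ⟨t₂, ht₂, -⟩ := h1T2.2
      have : T₂.length ≠ 0 := by
        intro hc
        rw [List.length_eq_zero_iff] at hc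
        simp [hc] at ht₂
      intro hc
      rw [hc] at hA₂len
      simp at hA₂len
      omega
    constructor
    · obtain ⟨p, hp⟩ := List.exists_mem_of_ne_nil A₁ hA₁ne
      exact ⟨p, hp, 1, 0, by simp⟩
    · obtain ⟨p, hp⟩ := List.exists_mem_of_ne_nil A₂ hA₂ne
      exact ⟨p, hp, 1, 0, by simp⟩
end
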